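/- arXiv:2101.00486 — 5 statements merged into one kernel-verified Lean document; each statement's English description precedes it below -/
import Mathlib

section
/- Let k₁, k₂ ∈ ℕ and β = (β_{-2k₁},...,β_{2k₂}) with β_{-2k₁} > 0. If β admits a representing measure supported on ℝ∖{0}, then it admits one that is r-atomic where r = rank β (the rank of the sequence β viewed as a Hankel sequence of length 2(k₁+k₂)+1). -/
open Matrix MeasureTheory

noncomputable section

/-- The `(k+1) × (k+1)` Hankel matrix `A_v = (v_{i+j})_{i,j=0}^k`. -/
def hankel (k : ℕ) (v : ℕ → ℝ) : Matrix (Fin (k+1)) (Fin (k+1)) ℝ :=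
  Matrix.of fun i j => v (i.1 + j.1)

/-- The top-left `r × r` corner `A_v(r-1) = (v_{i+j})_{i,j=0}^{r-1}`. -/
def hcorner (v : ℕ → ℝ) (r : ℕ) : Matrix (Fin r) (Fin r) ℝ :=
  Matrix.of fun i j => v (i.1 + j.1)

/-- The `(j+1)`-th column of the Hankel matrix `A_v`. -/
def hcol (k : ℕ) (v : ℕ → ℝ) (j : ℕ) : Fin (k+1) → ℝ :=
  fun i => v (i.1 + j)

/-- `r = rank v`: column `v_r` lies in the span of the preceding columns, and `r`
is minimal with this property. -/
def seqRank (k : ℕ) (v : ℕ → ℝ) (r : ℕ) : Prop :=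
  hcol k v r ∈ Submodule.span ℝ (hcol k v '' {j | j < r}) ∧
  ∀ i < r, hcol k v i ∉ Submodule.span ℝ (hcol k v '' {j | j < i})

/-- `φ = A_v(r-1)⁻¹ (v_r,…,v_{2r-1})ᵀ`. -/
def phi (v : ℕ → ℝ) (r : ℕ) : Fin r → ℝ :=
  (hcorner v r)⁻¹.mulVec fun i => v (r + i.1)

/-- `r = rank β`: `k+1` if the Hankel matrix is nonsingular, and otherwise the
smallest index of a column lying in the span of the preceding ones. -/
def seqRankFull (k : ℕ) (v : ℕ → ℝ) (r : ℕ) : Prop :=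
  (IsUnit (hankel k v).det ∧ r = k + 1) ∨ ((hankel k v).det = 0 ∧ seqRank k v r)

namespace S13

open Polynomial

/-! ### The moment functional -/

def L (w : ℕ → ℝ) (P : ℝ[X]) : ℝ := P.sum fun m c => c * w m

lemma L_eq_sum_range (w : ℕ → ℝ) (P : ℝ[X]) {N : ℕ} (hP : P.natDegree < N) :
    L w P = ∑ m ∈ Finset.range N, P.coeff m * w m :=
  Polynomial.sum_over_range' P (fun _ => by simp) N hP

lemma L_add (w : ℕ → ℝ) (P Q : ℝ[X]) : L w (P + Q) = L w P + L w Q :=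
  Polynomial.sum_add_index P Q _ (by simp) (by intros; ring)

lemma L_smul (w : ℕ → ℝ) (a : ℝ) (P : ℝ[X]) : L w (a • P) = a * L w P := by
  rw [L_eq_sum_range w (a • P) (N := P.natDegree + 1)
      (lt_of_le_of_lt (Polynomial.natDegree_smul_le a P) (Nat.lt_succ_self _)),
    L_eq_sum_range w P (Nat.lt_succ_self _), Finset.mul_sum]
  apply Finset.sum_congr rfl
  intros; simp [Polynomial.coeff_smul]; ring

/-- `L` as a linear map. -/
def Lℓ (w : ℕ → ℝ) : ℝ[X] →ₗ[ℝ] ℝ where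
  toFun := L w
  map_add' := L_add w
  map_smul' := L_smul w

lemma L_monomial (w : ℕ → ℝ) (m : ℕ) (c : ℝ) : L w (Polynomial.monomial m c) = c * w m := by
  unfold L; rw [Polynomial.sum_monomial_index]; ring_nf

lemma L_C_mul_X_pow (w : ℕ → ℝ) (m : ℕ) (c : ℝ) : L w (C c * X ^ m) = c * w m := by
  rw [Polynomial.C_mul_X_pow_eq_monomial, L_monomial]

lemma L_X_pow (w : ℕ → ℝ) (m : ℕ) : L w (X ^ m) = w m := by
  rw [← Polynomial.monomial_one_right_eq_X_pow, L_monomial]; ring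

/-! ### Coefficient-vector polynomials and the Hankel quadratic form -/

/-- polynomial with coefficient vector `c`. -/
def Qp {r : ℕ} (c : Fin r → ℝ) : ℝ[X] := ∑ i, C (c i) * X ^ (i : ℕ)

lemma Qp_natDegree_le {r : ℕ} (c : Fin r → ℝ) : (Qp c).natDegree ≤ r - 1 := by
  apply Polynomial.natDegree_sum_le_of_forall_le
  intro i _
  exact le_trans (Polynomial.natDegree_C_mul_le _ _)
    (by simpa using Nat.le_sub_one_of_lt i.2)

lemma Qp_natDegree_le' {n : ℕ} (c : Fin (n+1) → ℝ) : (Qp c).natDegree ≤ n :=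
  Qp_natDegree_le c

lemma Qp_eval {r : ℕ} (c : Fin r → ℝ) (x : ℝ) : (Qp c).eval x = ∑ i, c i * x ^ (i : ℕ) := by
  unfold Qp; simp [Polynomial.eval_finset_sum]

lemma Qp_coeff {r : ℕ} (c : Fin r → ℝ) (i : Fin r) : (Qp c).coeff i = c i := by
  unfold Qp
  rw [Polynomial.finset_sum_coeff]
  rw [Finset.sum_eq_single i]
  · simp
  · intro j _ hj
    rw [Polynomial.coeff_C_mul, Polynomial.coeff_X_pow, if_neg (by
      simpa using fun h => hj (Fin.ext h.symm))]
    ring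
  · simp

lemma Qp_eq_zero_iff {r : ℕ} (c : Fin r → ℝ) : Qp c = 0 ↔ c = 0 := by
  constructor
  · intro h
    funext i
    have := Qp_coeff c i
    rw [h] at this
    simpa using this.symm
  · rintro rfl
    unfold Qp; simp

lemma L_X_pow_mul_Qp {n : ℕ} (w : ℕ → ℝ) (c : Fin (n+1) → ℝ) (i : ℕ) :
    L w (X ^ i * Qp c) = ∑ j, c j * w (i + j) := by
  unfold Qp
  rw [Finset.mul_sum]
  rw [show (∑ j, X ^ i * (C (c j) * X ^ (j : ℕ))) = ∑ j, C (c j) * X ^ (i + j : ℕ) by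
    apply Finset.sum_congr rfl; intros; ring]
  rw [show L w (∑ j, C (c j) * X ^ (i + j : ℕ)) = Lℓ w (∑ j, C (c j) * X ^ (i + j : ℕ)) from rfl,
    map_sum]
  apply Finset.sum_congr rfl
  intro j _
  exact L_C_mul_X_pow w _ _

lemma mulVec_hankel_eq {n : ℕ} (w : ℕ → ℝ) (c : Fin (n+1) → ℝ) (i : Fin (n+1)) :
    (hankel n w).mulVec c i = L w (X ^ (i : ℕ) * Qp c) := by
  rw [L_X_pow_mul_Qp]
  simp [Matrix.mulVec, dotProduct, hankel, mul_comm]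

lemma dot_hankel_eq {n : ℕ} (w : ℕ → ℝ) (c : Fin (n+1) → ℝ) :
    c ⬝ᵥ (hankel n w).mulVec c = L w (Qp c * Qp c) := by
  have h1 : Qp c * Qp c = ∑ i, C (c i) * (X ^ (i : ℕ) * Qp c) := by
    unfold Qp
    rw [Finset.sum_mul]
    apply Finset.sum_congr rfl; intros; ring
  rw [h1, show L w (∑ i, C (c i) * (X ^ (i : ℕ) * Qp c)) =
      Lℓ w (∑ i, C (c i) * (X ^ (i : ℕ) * Qp c)) from rfl, map_sum]
  unfold dotProduct
  apply Finset.sum_congr rfl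
  intro i _
  rw [mulVec_hankel_eq, show (C (c i) * (X ^ (i : ℕ) * Qp c)) = c i • (X ^ (i : ℕ) * Qp c) by
    rw [Polynomial.smul_eq_C_mul]]
  exact (L_smul w _ _).symm

/-! ### Representing measures -/

/-- `ν` represents moments `w 0, …, w N`. -/
def Rep (ν : Measure ℝ) (w : ℕ → ℝ) (N : ℕ) : Prop :=
  ∀ m ≤ N, Integrable (fun x : ℝ => x ^ m) ν ∧ w m = ∫ x, x ^ m ∂ν

variable {ν : Measure ℝ} {w : ℕ → ℝ} {N : ℕ}

lemma integrable_eval (h : Rep ν w N) {P : ℝ[X]} (hP : P.natDegree ≤ N) :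
    Integrable (fun x => P.eval x) ν := by
  have h2 : (fun x => P.eval x) = fun x => ∑ i ∈ Finset.range (N + 1), P.coeff i * x ^ i := by
    funext x
    rw [Polynomial.eval_eq_sum_range' (Nat.lt_succ_of_le hP)]
  rw [h2]
  exact integrable_finset_sum _ fun i hi =>
    ((h i (Nat.lt_succ_iff.mp (Finset.mem_range.mp hi))).1).const_mul _

lemma L_eq_integral (h : Rep ν w N) {P : ℝ[X]} (hP : P.natDegree ≤ N) :
    L w P = ∫ x, P.eval x ∂ν := by
  have hN : P.natDegree < N + 1 := Nat.lt_succ_of_le hP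
  rw [L_eq_sum_range w P hN]
  have h1 : ∀ m ∈ Finset.range (N+1), P.coeff m * w m = ∫ x, P.coeff m * x ^ m ∂ν := by
    intro m hm
    rw [(h m (Nat.lt_succ_iff.mp (Finset.mem_range.mp hm))).2, integral_const_mul]
  rw [Finset.sum_congr rfl h1, ← integral_finset_sum]
  · congr 1; funext x; rw [Polynomial.eval_eq_sum_range' hN]
  · exact fun i hi => ((h i (Nat.lt_succ_iff.mp (Finset.mem_range.mp hi))).1).const_mul _

lemma L_nonneg (h : Rep ν w N) {P : ℝ[X]} (hP : P.natDegree ≤ N)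
    (hpos : ∀ x : ℝ, 0 ≤ P.eval x) : 0 ≤ L w P := by
  rw [L_eq_integral h hP]
  exact integral_nonneg hpos

lemma ae_zero_of_L_zero (h : Rep ν w N) {P : ℝ[X]} (hP : P.natDegree ≤ N)
    (hpos : ∀ x : ℝ, 0 ≤ P.eval x) (hz : L w P = 0) : ∀ᵐ x ∂ν, P.eval x = 0 := by
  rw [L_eq_integral h hP] at hz
  have := (integral_eq_zero_iff_of_nonneg (fun x => hpos x) (integrable_eval h hP)).mp hz
  filter_upwards [this] with x hx using hx

lemma finsupp_rep {n : ℕ} (hrep : Rep ν w (2*n)) (hν0 : ν {0} = 0)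
    {P : ℝ[X]} (hP : P ≠ 0) (hvan : ∀ᵐ x ∂ν, P.eval x = 0) :
    ∃ S : Finset ℝ, (↑S ⊆ {x : ℝ | P.eval x = 0}) ∧ (0:ℝ) ∉ S ∧
      (∀ x ∈ S, 0 < (ν {x}).toReal) ∧
      ∀ m ≤ 2*n, w m = ∑ x ∈ S, (ν {x}).toReal * x ^ m := by
  classical
  set F := P.roots.toFinset with hF
  have hcompl : ν ((↑F : Set ℝ)ᶜ) = 0 := by
    have h1 : ν {x : ℝ | ¬ P.eval x = 0} = 0 := hvan
    refine measure_mono_null ?_ h1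
    intro x hx hx2
    exact hx (by
      simp only [hF, Multiset.mem_toFinset, Finset.coe_sort_coe, Finset.mem_coe,
        Multiset.mem_toFinset] at *
      exact (Polynomial.mem_roots hP).mpr hx2)
  have hsum : ∀ m, m ≤ 2*n → w m = ∑ x ∈ F, (ν {x}).toReal * x ^ m := by
    intro m hm
    have hint := (hrep m hm).1
    have h3 : ∫ x, x ^ m ∂ν = ∫ x in (↑F : Set ℝ), x ^ m ∂ν := by
      rw [← integral_add_compl (F.finite_toSet.measurableSet) hint,
        setIntegral_measure_zero _ hcompl, add_zero]
    rw [(hrep m hm).2, h3, setIntegral_finset F hint.integrableOn]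
    simp [smul_eq_mul, measureReal_def]
  set S := F.filter (fun x => x ≠ 0 ∧ (ν {x}).toReal ≠ 0) with hS
  refine ⟨S, ?_, ?_, ?_, ?_⟩
  · intro x hx
    simp only [hS, Finset.coe_filter, Set.mem_setOf_eq] at hx
    have := hx.1
    simp only [hF, Multiset.mem_toFinset] at this
    exact (Polynomial.mem_roots hP).mp this
  · intro h0
    simp [hS] at h0
  · intro x hx
    simp only [hS, Finset.mem_filter] at hx
    exact lt_of_le_of_ne ENNReal.toReal_nonneg (Ne.symm hx.2.2)
  · intro m hm
    rw [hsum m hm]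
    symm
    apply Finset.sum_filter_of_ne
    intro x _ hne
    rw [mul_ne_zero_iff] at hne
    refine ⟨?_, hne.1⟩
    rintro rfl
    exact hne.1 (by simp [hν0])

/-! ### The atomic functional -/

/-- If the moments are finitely atomic then so is `L`. -/
lemma L_atomic {n : ℕ} {w : ℕ → ℝ} {S : Finset ℝ} {lam : ℝ → ℝ}
    (hrep2 : ∀ m ≤ 2*n, w m = ∑ x ∈ S, lam x * x ^ m)
    {P : ℝ[X]} (hdeg : P.natDegree ≤ 2*n) :
    L w P = ∑ x ∈ S, lam x * P.eval x := by
  rw [L_eq_sum_range w P (Nat.lt_succ_of_le hdeg)]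
  have h1 : ∀ m ∈ Finset.range (2*n+1), P.coeff m * w m
      = ∑ x ∈ S, P.coeff m * (lam x * x ^ m) := by
    intro m hm
    rw [hrep2 m (Nat.lt_succ_iff.mp (Finset.mem_range.mp hm)), Finset.mul_sum]
  rw [Finset.sum_congr rfl h1, Finset.sum_comm]
  apply Finset.sum_congr rfl
  intro x _
  rw [Polynomial.eval_eq_sum_range' (Nat.lt_succ_of_le hdeg), Finset.mul_sum]
  apply Finset.sum_congr rfl
  intros; ring

/-! ### Vandermonde nondegeneracy -/

lemma vdm_zero {s : ℕ} {ξ : Fin s → ℝ} (hinj : Function.Injective ξ)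
    {g : Fin s → ℝ} (hg : ∀ i : Fin s, ∑ j, g j * ξ j ^ (i : ℕ) = 0) : g = 0 := by
  classical
  have hdet : (Matrix.vandermonde ξ)ᵀ.det ≠ 0 := by
    rw [Matrix.det_transpose, Matrix.det_vandermonde]
    apply Finset.prod_ne_zero_iff.mpr
    intro i _
    apply Finset.prod_ne_zero_iff.mpr
    intro j hj
    exact sub_ne_zero_of_ne (fun h => (Finset.mem_Ioi.mp hj).ne' (hinj h))
  have h0 : (Matrix.vandermonde ξ)ᵀ.mulVec g = 0 := by
    funext i
    simpa [Matrix.mulVec, dotProduct, Matrix.vandermonde, mul_comm] using hg i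
  by_contra hgne
  exact hdet ((Matrix.exists_mulVec_eq_zero_iff).mp ⟨g, hgne, h0⟩)

end S13

namespace S13
open Polynomial

lemma vdm_zero_finset {S : Finset ℝ} {g : ℝ → ℝ}
    (hg : ∀ i < S.card, ∑ x ∈ S, g x * x ^ i = 0) : ∀ x ∈ S, g x = 0 := by
  classical
  set e := S.equivFin.symm with he
  set ξ : Fin S.card → ℝ := fun j => (e j : ℝ) with hξ
  have hinj : Function.Injective ξ := fun a b h => e.injective (Subtype.ext h)
  have hsum : ∀ f : ℝ → ℝ, ∑ j, f (ξ j) = ∑ x ∈ S, f x := by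
    intro f
    rw [← Finset.sum_coe_sort S f]
    exact Equiv.sum_comp e fun x => f (x : ℝ)
  have h2 : (fun j => g (ξ j)) = 0 := by
    apply vdm_zero hinj
    intro i
    rw [hsum (fun x => g x * x ^ (i : ℕ))]
    exact hg i (by simpa using i.2)
  intro x hx
  have : g (ξ (S.equivFin ⟨x, hx⟩)) = 0 := congrFun h2 _
  simpa [hξ, he] using this

lemma seqRank_unique {k : ℕ} {v : ℕ → ℝ} {r r' : ℕ}
    (h : seqRank k v r) (h' : seqRank k v r') : r = r' := by
  rcases lt_trichotomy r r' with h1|h1|h1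
  · exact absurd h.1 (h'.2 r h1)
  · exact h1
  · exact absurd h'.1 (h.2 r' h1)

lemma prod_X_sub_C_root {S : Finset ℝ} {x : ℝ} (hx : x ∈ S) :
    x ^ S.card = ∑ j ∈ Finset.range S.card, (-((∏ y ∈ S, (X - C y)).coeff j)) * x ^ j := by
  classical
  set P := ∏ y ∈ S, (X - C y) with hP
  have hmonic : P.Monic := monic_prod_of_monic _ _ fun y _ => monic_X_sub_C y
  have hdeg : P.natDegree = S.card := by
    rw [hP, Polynomial.natDegree_prod _ _ fun y _ => X_sub_C_ne_zero y]
    simp [Polynomial.natDegree_X_sub_C]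
  have hev : P.eval x = 0 := by
    rw [hP, Polynomial.eval_prod]
    exact Finset.prod_eq_zero hx (by simp)
  have h1 : P.eval x = ∑ j ∈ Finset.range (S.card + 1), P.coeff j * x ^ j := by
    rw [Polynomial.eval_eq_sum_range' (by rw [hdeg]; exact Nat.lt_succ_self _)]
  rw [Finset.sum_range_succ] at h1
  have hlead : P.coeff S.card = 1 := by
    have := hmonic.leadingCoeff
    rwa [Polynomial.leadingCoeff, hdeg] at this
  rw [hev, hlead, one_mul] at h1
  have h2 := eq_neg_of_add_eq_zero_right h1.symm
  rw [h2, ← Finset.sum_neg_distrib]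
  exact Finset.sum_congr rfl (by intros; ring)

lemma seqRank_of_atomic {n : ℕ} {w : ℕ → ℝ} {S : Finset ℝ} {lam : ℝ → ℝ}
    (hpos : ∀ x ∈ S, 0 < lam x)
    (hrep2 : ∀ m ≤ 2*n, w m = ∑ x ∈ S, lam x * x ^ m)
    (hcard : S.card ≤ n) : seqRank n w S.card := by
  classical
  constructor
  · -- membership
    set P := ∏ y ∈ S, (X - C y) with hP
    have hcols : hcol n w S.card
        = ∑ j ∈ Finset.range S.card, (-(P.coeff j)) • hcol n w j := by
      funext i
      have hiS : (i : ℕ) + S.card ≤ 2*n := by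
        have := i.2
        omega
      simp only [hcol, Finset.sum_apply, Pi.smul_apply, smul_eq_mul]
      rw [hrep2 _ hiS]
      have h1 : ∀ j ∈ Finset.range S.card, (-(P.coeff j)) * w ((i:ℕ) + j)
          = ∑ x ∈ S, lam x * x ^ (i : ℕ) * ((-(P.coeff j)) * x ^ j) := by
        intro j hj
        rw [hrep2 _ (by have := i.2; have := Finset.mem_range.mp hj; omega), Finset.mul_sum]
        apply Finset.sum_congr rfl
        intros; rw [pow_add]; ring
      rw [Finset.sum_congr rfl h1, Finset.sum_comm]
      apply Finset.sum_congr rfl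
      intro x hx
      rw [← Finset.mul_sum, ← prod_X_sub_C_root hx, pow_add]
      ring
    rw [hcols]
    apply Submodule.sum_mem
    intro j hj
    exact Submodule.smul_mem _ _ (Submodule.subset_span
      ⟨j, Finset.mem_range.mp hj, rfl⟩)
  · -- minimality
    intro i hi hmem
    rw [Finsupp.mem_span_image_iff_linearCombination] at hmem
    obtain ⟨l, hlsupp, hl⟩ := hmem
    have hrow : ∀ i' : ℕ, i' ≤ n → w (i' + i) = ∑ j ∈ l.support, l j * w (i' + j) := by
      intro i' hi'
      have := congrFun hl ⟨i', Nat.lt_succ_of_le hi'⟩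
      rw [Finsupp.linearCombination_apply, Finsupp.sum, Finset.sum_apply] at this
      simp only [hcol, Pi.smul_apply, smul_eq_mul] at this
      exact this.symm
    set h : ℝ[X] := X ^ i - ∑ j ∈ l.support, C (l j) * X ^ j with hh
    have hsupp_lt : ∀ j ∈ l.support, j < i := fun j hj => hlsupp hj
    have hcoeffi : h.coeff i = 1 := by
      rw [hh, Polynomial.coeff_sub, Polynomial.coeff_X_pow, if_pos rfl,
        Polynomial.finset_sum_coeff]
      rw [Finset.sum_eq_zero, sub_zero]
      intro j hj
      rw [Polynomial.coeff_C_mul, Polynomial.coeff_X_pow,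
        if_neg (Nat.ne_of_lt (hsupp_lt j hj)).symm]
      ring
    have hne : h ≠ 0 := fun h0 => by simp [h0] at hcoeffi
    have hdegh : h.natDegree ≤ i := by
      rw [hh]
      apply le_trans (Polynomial.natDegree_sub_le _ _)
      apply max_le (by simp)
      apply le_trans (Polynomial.natDegree_sum_le_of_forall_le _ _ ?_) le_rfl
      intro j hj
      exact le_trans (Polynomial.natDegree_C_mul_le _ _)
        (by simp [Polynomial.natDegree_X_pow]; exact le_of_lt (hsupp_lt j hj))
    have heval : ∀ x ∈ S, h.eval x = 0 := by
      have hvan : ∀ x ∈ S, lam x * h.eval x = 0 := by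
        apply vdm_zero_finset
        intro i' hi'
        have hevalh : ∀ x : ℝ, h.eval x = x ^ i - ∑ j ∈ l.support, l j * x ^ j := by
          intro x
          rw [hh]
          simp [Polynomial.eval_finset_sum]
        have e1 : ∀ x ∈ S, lam x * h.eval x * x ^ i'
            = lam x * x ^ (i' + i) - ∑ j ∈ l.support, l j * (lam x * x ^ (i' + j)) := by
          intro x _
          rw [hevalh x, mul_sub, sub_mul]
          congr 1
          · rw [pow_add]; ring
          · rw [Finset.mul_sum, Finset.sum_mul]
            apply Finset.sum_congr rfl
            intros; rw [pow_add]; ring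
        rw [Finset.sum_congr rfl e1, Finset.sum_sub_distrib]
        have e2 : ∑ x ∈ S, ∑ j ∈ l.support, l j * (lam x * x ^ (i' + j))
            = ∑ j ∈ l.support, l j * w (i' + j) := by
          rw [Finset.sum_comm]
          apply Finset.sum_congr rfl
          intro j hj
          rw [hrep2 _ (by have := hsupp_lt j hj; omega), Finset.mul_sum]
        rw [e2, ← hrep2 _ (by omega), hrow i' (by omega), sub_self]
      intro x hx
      have := hvan x hx
      rcases mul_eq_zero.mp this with h1 | h1
      · exact absurd h1 (ne_of_gt (hpos x hx))
      · exact h1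
    -- too many roots
    have hsub : S ⊆ h.roots.toFinset := by
      intro x hx
      rw [Multiset.mem_toFinset, Polynomial.mem_roots hne]
      exact heval x hx
    have : S.card ≤ i := by
      calc S.card ≤ h.roots.toFinset.card := Finset.card_le_card hsub
        _ ≤ Multiset.card h.roots := Multiset.toFinset_card_le _
        _ ≤ h.natDegree := Polynomial.card_roots' h
        _ ≤ i := hdegh
    omega

lemma package {r : ℕ} {w : ℕ → ℝ} {N : ℕ} {S : Finset ℝ} {lam : ℝ → ℝ}
    (hcard : S.card = r) (h0S : (0:ℝ) ∉ S) (hpos : ∀ x ∈ S, 0 < lam x)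
    (hrep2 : ∀ m ≤ N, w m = ∑ x ∈ S, lam x * x ^ m) :
    ∃ x : Fin r → ℝ, Function.Injective x ∧ (∀ ℓ, x ℓ ≠ 0) ∧
      ∃ σ : Fin r → ℝ, (∀ ℓ, 0 < σ ℓ) ∧ ∀ m ≤ N, w m = ∑ ℓ, σ ℓ * x ℓ ^ m := by
  classical
  subst hcard
  set e := S.equivFin.symm with he
  refine ⟨fun j => (e j : ℝ), fun a b h => e.injective (Subtype.ext h), ?_, ?_⟩
  · intro ℓ h0
    exact h0S (h0 ▸ (e ℓ).2)
  · refine ⟨fun j => lam (e j : ℝ), fun ℓ => hpos _ (e ℓ).2, ?_⟩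
    intro m hm
    rw [hrep2 m hm, ← Finset.sum_coe_sort S (fun x => lam x * x ^ m)]
    exact (Equiv.sum_comp e fun x => lam (x:ℝ) * (x:ℝ) ^ m).symm

end S13

namespace S13
open Polynomial

lemma caseB {n r : ℕ} {ν : Measure ℝ} {w : ℕ → ℝ}
    (hrep : Rep ν w (2*n)) (hν0 : ν {0} = 0)
    (hdet : (hankel n w).det = 0) (hr : seqRank n w r) :
    ∃ x : Fin r → ℝ, Function.Injective x ∧ (∀ ℓ, x ℓ ≠ 0) ∧
      ∃ σ : Fin r → ℝ, (∀ ℓ, 0 < σ ℓ) ∧ ∀ m ≤ 2*n, w m = ∑ ℓ, σ ℓ * x ℓ ^ m := by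
  classical
  obtain ⟨c, hc0, hAc⟩ := Matrix.exists_mulVec_eq_zero_iff.mpr hdet
  set Q := Qp c with hQ
  have hQne : Q ≠ 0 := fun h => hc0 ((Qp_eq_zero_iff c).mp h)
  have hQdeg : Q.natDegree ≤ n := Qp_natDegree_le' c
  have hQQdeg : (Q * Q).natDegree ≤ 2*n :=
    le_trans (Polynomial.natDegree_mul_le) (by omega)
  have hQQpos : ∀ x : ℝ, 0 ≤ (Q * Q).eval x := by
    intro x; rw [Polynomial.eval_mul]; exact mul_self_nonneg _
  have hLzero : L w (Q * Q) = 0 := by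
    rw [← dot_hankel_eq, hAc]
    simp
  have hvan := ae_zero_of_L_zero hrep hQQdeg hQQpos hLzero
  obtain ⟨S, hSsub, hS0, hSpos, hSrep⟩ :=
    finsupp_rep hrep hν0 (mul_ne_zero hQne hQne) hvan
  have hSroots : ∀ x ∈ S, Q.eval x = 0 := by
    intro x hx
    have := hSsub hx
    rw [Set.mem_setOf_eq, Polynomial.eval_mul] at this
    exact mul_self_eq_zero.mp this
  have hScard : S.card ≤ n := by
    have hsub : S ⊆ Q.roots.toFinset := by
      intro x hx
      rw [Multiset.mem_toFinset, Polynomial.mem_roots hQne]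
      exact hSroots x hx
    calc S.card ≤ Q.roots.toFinset.card := Finset.card_le_card hsub
      _ ≤ Multiset.card Q.roots := Multiset.toFinset_card_le _
      _ ≤ Q.natDegree := Polynomial.card_roots' Q
      _ ≤ n := hQdeg
  have hSR : seqRank n w S.card :=
    seqRank_of_atomic hSpos hSrep hScard
  have hrS : S.card = r := seqRank_unique hSR hr
  exact package hrS hS0 hSpos hSrep

end S13

namespace S13
open Polynomial

lemma Qp_of_coeff {n : ℕ} {P : ℝ[X]} (hP : P.natDegree ≤ n) :
    Qp (fun i : Fin (n+1) => P.coeff i) = P := by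
  unfold Qp
  rw [Fin.sum_univ_eq_sum_range (fun i => C (P.coeff i) * X ^ i)]
  conv_rhs => rw [P.as_sum_range' (n+1) (Nat.lt_succ_of_le hP)]
  apply Finset.sum_congr rfl
  intros
  rw [Polynomial.C_mul_X_pow_eq_monomial]

lemma mulVec_eq_zero_of_ae {n : ℕ} {ν : Measure ℝ} {w : ℕ → ℝ}
    (hrep : Rep ν w (2*n)) {c : Fin (n+1) → ℝ}
    (hae : ∀ᵐ x ∂ν, (Qp c).eval x = 0) : (hankel n w).mulVec c = 0 := by
  funext i
  rw [mulVec_hankel_eq]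
  have hdeg : (X ^ (i:ℕ) * Qp c).natDegree ≤ 2*n := by
    apply le_trans Polynomial.natDegree_mul_le
    have h1 := Qp_natDegree_le' c
    have h2 : (X : ℝ[X]) ^ (i:ℕ) ≠ 0 := pow_ne_zero _ Polynomial.X_ne_zero
    have := i.2
    simp only [Polynomial.natDegree_X_pow]
    omega
  rw [L_eq_integral hrep hdeg]
  have : ∀ᵐ x ∂ν, (X ^ (i:ℕ) * Qp c).eval x = 0 := by
    filter_upwards [hae] with x hx
    rw [Polynomial.eval_mul, hx, mul_zero]
  rw [integral_congr_ae (this.mono fun x hx => hx), integral_zero]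
  simp

lemma L_sq_pos {n : ℕ} {ν : Measure ℝ} {w : ℕ → ℝ}
    (hrep : Rep ν w (2*n)) (hdet : IsUnit (hankel n w).det)
    {Q : ℝ[X]} (hQ : Q ≠ 0) (hdeg : Q.natDegree ≤ n) : 0 < L w (Q * Q) := by
  have hQQdeg : (Q * Q).natDegree ≤ 2*n :=
    le_trans Polynomial.natDegree_mul_le (by omega)
  have hQQpos : ∀ x : ℝ, 0 ≤ (Q * Q).eval x := by
    intro x; rw [Polynomial.eval_mul]; exact mul_self_nonneg _
  rcases lt_or_eq_of_le (L_nonneg hrep hQQdeg hQQpos) with h | h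
  · exact h
  · exfalso
    set c : Fin (n+1) → ℝ := fun i => Q.coeff i with hc
    have hQc : Qp c = Q := Qp_of_coeff hdeg
    have hvan := ae_zero_of_L_zero hrep hQQdeg hQQpos h.symm
    have hvan' : ∀ᵐ x ∂ν, (Qp c).eval x = 0 := by
      filter_upwards [hvan] with x hx
      rw [hQc]
      rw [Polynomial.eval_mul] at hx
      exact mul_self_eq_zero.mp hx
    have hAc := mulVec_eq_zero_of_ae hrep hvan'
    have hc0 : c = 0 := by
      have h1 : (hankel n w)⁻¹.mulVec ((hankel n w).mulVec c) = c := by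
        rw [Matrix.mulVec_mulVec, Matrix.nonsing_inv_mul _ hdet, Matrix.one_mulVec]
      rw [hAc, Matrix.mulVec_zero] at h1
      exact h1.symm
    exact hQ (by rw [← hQc, hc0, (Qp_eq_zero_iff 0).mpr rfl])

end S13

namespace S13
open Polynomial

lemma exists_phi {n : ℕ} {ν : Measure ℝ} {w : ℕ → ℝ}
    (hrep : Rep ν w (2*n)) (hdet : IsUnit (hankel n w).det) (hn : 0 < n) :
    ∃ φ : Fin (n+1) → ℝ, φ 0 ≠ 0 ∧
      ∀ i : Fin (n+1), (i:ℕ) < n → (hankel n w).mulVec φ i = w (n+1+i) := by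
  classical
  set A := hankel n w with hA
  have hAsym : Aᵀ = A := by
    funext i j
    simp [hA, hankel, Matrix.transpose_apply, Nat.add_comm]
  have hAinv_sym : (A⁻¹)ᵀ = A⁻¹ := by
    rw [Matrix.transpose_nonsing_inv, hAsym]
  set u : Fin (n+1) → ℝ := A⁻¹.mulVec (Pi.single 0 1) with hu
  have hAu : A.mulVec u = Pi.single 0 1 := by
    rw [hu, Matrix.mulVec_mulVec, Matrix.mul_nonsing_inv _ hdet, Matrix.one_mulVec]
  have hune : u ≠ 0 := by
    intro h0
    have := hAu
    rw [h0, Matrix.mulVec_zero] at this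
    have := congrFun this 0
    simp at this
  set nn : Fin (n+1) := Fin.last n with hnn
  set b : ℝ → (Fin (n+1) → ℝ) := fun t i => if (i:ℕ) = n then t else w (n+1+i) with hb
  set φ : ℝ → (Fin (n+1) → ℝ) := fun t => A⁻¹.mulVec (b t) with hφ
  have hφrow : ∀ t, ∀ i : Fin (n+1), (i:ℕ) < n → (A.mulVec (φ t)) i = w (n+1+i) := by
    intro t i hi
    rw [hφ]
    simp only
    rw [Matrix.mulVec_mulVec, Matrix.mul_nonsing_inv _ hdet, Matrix.one_mulVec, hb]
    exact if_neg (by omega)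
  have hφ0 : ∀ t, φ t 0 = u ⬝ᵥ b t := by
    intro t
    rw [hφ]
    simp only [Matrix.mulVec, dotProduct]
    apply Finset.sum_congr rfl
    intro j _
    congr 1
    rw [hu]
    simp only [Matrix.mulVec, dotProduct]
    rw [Finset.sum_eq_single 0]
    · rw [show A⁻¹ j 0 = (A⁻¹)ᵀ 0 j by rw [Matrix.transpose_apply], hAinv_sym]
      simp
    · intro l _ hl
      rw [Pi.single_apply, if_neg hl, mul_zero]
    · simp
  have hφlin : ∀ t, φ t 0 = u ⬝ᵥ b 0 + t * u nn := by
    intro t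
    rw [hφ0]
    unfold dotProduct
    have h1 : ∀ i : Fin (n+1), u i * b t i
        = u i * b 0 i + (if i = nn then u i * t else 0) := by
      intro i
      by_cases hi : i = nn
      · subst hi
        rw [if_pos rfl, hb]
        simp [hnn]
      · rw [if_neg hi, hb]
        have hival : (i : ℕ) ≠ n := fun h => hi (Fin.ext (by simp [hnn, h]))
        simp only [if_neg hival]
        ring
    rw [Finset.sum_congr rfl (fun i _ => h1 i), Finset.sum_add_distrib,
      Finset.sum_ite_eq' Finset.univ nn (fun i => u i * t)]
    simp [mul_comm]
  -- now the case analysis on `u nn` and `u ⬝ᵥ b 0`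
  by_cases hunn : u nn ≠ 0
  · refine ⟨φ ((1 - u ⬝ᵥ b 0) / u nn), ?_, hφrow _⟩
    rw [hφlin, div_mul_cancel₀ _ hunn]
    norm_num
  push_neg at hunn
  by_cases ha : u ⬝ᵥ b 0 ≠ 0
  · refine ⟨φ 0, ?_, hφrow _⟩
    rw [hφlin, hunn]
    simpa using ha
  push_neg at ha
  -- contradiction via positive definiteness
  exfalso
  set U : ℝ[X] := Qp u with hU
  have hUne : U ≠ 0 := fun h => hune ((Qp_eq_zero_iff u).mp h)
  have hUdeg : U.natDegree ≤ n - 1 := by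
    rw [Polynomial.natDegree_le_iff_coeff_eq_zero]
    intro N hN
    rcases lt_or_ge n N with hNn | hNn
    · exact Polynomial.coeff_eq_zero_of_natDegree_lt
        (lt_of_le_of_lt (Qp_natDegree_le' u) hNn)
    · have hNeq : N = n := by omega
      rw [hNeq, hU]
      exact (Qp_coeff u (Fin.last n)).trans hunn
  have hG : ∀ i : ℕ, i ≤ n + 1 → L w (X ^ i * U) = if i = 0 then 1 else 0 := by
    intro i hi
    rcases le_or_gt i n with hin | hin
    · have := mulVec_hankel_eq w u ⟨i, by omega⟩
      rw [hAu] at this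
      rw [hU, ← this, Pi.single_apply]
      congr 1
      simp [Fin.ext_iff, eq_comm]
    · have hieq : i = n + 1 := by omega
      subst hieq
      rw [hU, L_X_pow_mul_Qp, if_neg (by omega)]
      rw [← ha]
      unfold dotProduct
      apply Finset.sum_congr rfl
      intro j _
      by_cases hj : (j:ℕ) = n
      · have huj : u j = 0 := by
          rw [show j = nn from Fin.ext (by simp [hnn, hj])]
          exact hunn
        rw [huj, zero_mul, zero_mul]
      · rw [hb]
        simp only [if_neg hj]
  have hLXU : L w ((X * U) * (X * U)) = 0 := by
    have hXUU : (X * U) * (X * U) = X ^ 2 * (U * U) := by ring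
    have hUU : U * U = ∑ j, C (u j) * (X ^ (j:ℕ) * U) := by
      calc U * U = Qp u * U := by rw [← hU]
        _ = (∑ j, C (u j) * X ^ (j:ℕ)) * U := rfl
        _ = ∑ j, C (u j) * (X ^ (j:ℕ) * U) := by
            rw [Finset.sum_mul]
            apply Finset.sum_congr rfl
            intros; ring
    rw [hXUU, hUU, Finset.mul_sum]
    rw [show (∑ j : Fin (n+1), X^2 * (C (u j) * (X ^ (j:ℕ) * U)))
        = ∑ j : Fin (n+1), C (u j) * (X ^ ((j:ℕ)+2) * U) by
      apply Finset.sum_congr rfl; intros; ring]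
    rw [show L w (∑ j : Fin (n+1), C (u j) * (X ^ ((j:ℕ)+2) * U))
        = Lℓ w (∑ j : Fin (n+1), C (u j) * (X ^ ((j:ℕ)+2) * U)) from rfl, map_sum]
    apply Finset.sum_eq_zero
    intro j _
    have hsm : (C (u j) * (X ^ ((j:ℕ)+2) * U)) = u j • (X ^ ((j:ℕ)+2) * U) := by
      rw [Polynomial.smul_eq_C_mul]
    rw [show Lℓ w (C (u j) * (X ^ ((j:ℕ)+2) * U)) = L w (C (u j) * (X ^ ((j:ℕ)+2) * U)) from rfl,
      hsm, L_smul]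
    by_cases hj : (j:ℕ) = n
    · have huj : u j = 0 := by
        rw [show j = nn from Fin.ext (by simp [hnn, hj])]
        exact hunn
      rw [huj, zero_mul]
    · have hj2 : (j:ℕ) + 2 ≤ n + 1 := by have := j.2; omega
      rw [hG _ hj2, if_neg (by omega), mul_zero]
  have hXUne : X * U ≠ 0 := mul_ne_zero Polynomial.X_ne_zero hUne
  have hXUdeg : (X * U).natDegree ≤ n := by
    apply le_trans Polynomial.natDegree_mul_le
    rw [Polynomial.natDegree_X]
    omega
  exact absurd hLXU (ne_of_gt (L_sq_pos hrep hdet hXUne hXUdeg))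
end S13

namespace S13
open Polynomial Filter

lemma pos_of_no_roots {q : ℝ[X]} (hq : q.Monic) (hnr : ∀ x : ℝ, q.eval x ≠ 0) :
    (∀ x : ℝ, 0 < q.eval x) ∧ Even q.natDegree := by
  rcases Nat.eq_zero_or_pos q.natDegree with hd | hd
  · have hq1 : q = 1 := hq.natDegree_eq_zero.mp hd
    constructor
    · intro x; rw [hq1]; simp
    · rw [hd]; exact Even.zero
  have hdeg : 0 < q.degree := natDegree_pos_iff_degree_pos.mp hd
  have hpos : ∀ x : ℝ, 0 < q.eval x := by
    have htop := q.tendsto_atTop_of_leadingCoeff_nonneg hdeg (by rw [hq.leadingCoeff]; norm_num)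
    obtain ⟨x0, hx0⟩ := (htop.eventually_ge_atTop 1).exists
    intro x
    rcases lt_or_ge 0 (q.eval x) with h | h
    · exact h
    exfalso
    have hlt : q.eval x < 0 := lt_of_le_of_ne h (hnr x)
    have hsub := intermediate_value_uIcc (a := x) (b := x0) (f := fun y => q.eval y)
      (q.continuous_aeval.continuousOn)
    have h0 : (0:ℝ) ∈ Set.uIcc (q.eval x) (q.eval x0) :=
      Set.mem_uIcc.mpr (Or.inl ⟨le_of_lt hlt, by linarith⟩)
    obtain ⟨z, _, hz⟩ := hsub h0
    exact hnr z hz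
  refine ⟨hpos, ?_⟩
  by_contra hodd
  rw [Nat.not_even_iff_odd] at hodd
  set q' : ℝ[X] := q.comp (-X) with hq'
  have hq'deg : q'.natDegree = q.natDegree := by
    rw [hq', Polynomial.natDegree_comp]
    simp
  have hq'lead : q'.leadingCoeff = -1 := by
    rw [hq', Polynomial.leadingCoeff_comp (by simp)]
    rw [hq.leadingCoeff]
    simp [hodd.neg_one_pow]
  have hq'degpos : 0 < q'.degree := by
    rw [← Polynomial.natDegree_pos_iff_degree_pos, hq'deg]
    exact hd
  have hbot := q'.tendsto_atBot_of_leadingCoeff_nonpos hq'degpos (by rw [hq'lead]; norm_num)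
  obtain ⟨x1, hx1⟩ := (hbot.eventually_le_atBot (-1)).exists
  have h2 : eval x1 q' = q.eval (-x1) := by
    rw [hq', Polynomial.eval_comp]; simp
  rw [h2] at hx1
  linarith [hpos (-x1)]
end S13

namespace S13
open Polynomial

lemma sign_structure {p : ℝ[X]} (hmonic : p.Monic) :
    ∃ T : Finset ℝ, ∃ s : ℝ[X],
      (∀ a ∈ T, p.eval a = 0) ∧ s.Monic ∧ s.natDegree = T.card ∧
      T.card ≤ p.natDegree ∧ T.card % 2 = p.natDegree % 2 ∧
      (∀ x, 0 ≤ (p * s).eval x) ∧ (∀ x, s.eval x = 0 → p.eval x = 0) := by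
  classical
  have hpne : p ≠ 0 := hmonic.ne_zero
  set D : ℝ[X] := (p.roots.map fun a => X - C a).prod with hD
  obtain ⟨q, hq⟩ := Polynomial.prod_multiset_X_sub_C_dvd p
  have hDmonic : D.Monic := monic_multiset_prod_of_monic _ _ (fun a _ => monic_X_sub_C a)
  have hqmonic : q.Monic := hDmonic.of_mul_monic_left (hq ▸ hmonic)
  have hqroots : q.roots = 0 := by
    have h1 : p.roots = D.roots + q.roots := by
      rw [hq]
      exact Polynomial.roots_mul (hq ▸ hpne)
    rw [hD, Polynomial.roots_multiset_prod_X_sub_C] at h1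
    have := left_eq_add.mp h1
    exact this
  have hqnr : ∀ x : ℝ, q.eval x ≠ 0 := by
    intro x hx
    have : x ∈ q.roots := (Polynomial.mem_roots hqmonic.ne_zero).mpr hx
    rw [hqroots] at this
    simp at this
  obtain ⟨hqpos, hqeven⟩ := pos_of_no_roots hqmonic hqnr
  set T : Finset ℝ := p.roots.toFinset.filter (fun a => Odd (p.roots.count a)) with hT
  set s : ℝ[X] := ∏ a ∈ T, (X - C a) with hs
  have hsmonic : s.Monic := monic_prod_of_monic _ _ fun a _ => monic_X_sub_C a
  have hsdeg : s.natDegree = T.card := by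
    rw [hs, Polynomial.natDegree_prod _ _ fun a _ => X_sub_C_ne_zero a]
    simp [Polynomial.natDegree_X_sub_C]
  have hTroots : ∀ a ∈ T, p.eval a = 0 := by
    intro a ha
    rw [hT, Finset.mem_filter, Multiset.mem_toFinset] at ha
    exact (Polynomial.mem_roots hpne).mp ha.1
  have hTcard : T.card ≤ p.natDegree := by
    calc T.card ≤ p.roots.toFinset.card := Finset.card_le_card (Finset.filter_subset _ _)
      _ ≤ Multiset.card p.roots := Multiset.toFinset_card_le _
      _ ≤ p.natDegree := Polynomial.card_roots' p
  -- parity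
  have hdegD : D.natDegree = Multiset.card p.roots := by
    rw [hD]
    exact Polynomial.natDegree_multiset_prod_X_sub_C_eq_card _
  have hdegsum : p.natDegree = D.natDegree + q.natDegree := by
    rw [hq]
    exact Polynomial.natDegree_mul hDmonic.ne_zero hqmonic.ne_zero
  have hcount : Multiset.card p.roots = ∑ a ∈ p.roots.toFinset, p.roots.count a :=
    (Multiset.toFinset_sum_count_eq _).symm
  have hparity : (Multiset.card p.roots) % 2 = T.card % 2 := by
    rw [hcount, Finset.sum_nat_mod]
    congr 1
    rw [show T.card = ∑ a ∈ p.roots.toFinset, if Odd (p.roots.count a) then 1 else 0 by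
      rw [hT, Finset.card_filter]]
    apply Finset.sum_congr rfl
    intro a _
    by_cases h : Odd (p.roots.count a)
    · rw [if_pos h, Nat.odd_iff.mp h]
    · rw [if_neg h, Nat.even_iff.mp (Nat.not_odd_iff_even.mp h)]
  obtain ⟨c2, hc2⟩ := hqeven
  -- nonnegativity
  have hnonneg : ∀ x : ℝ, 0 ≤ (p * s).eval x := by
    intro x
    have hevalD : D.eval x = ∏ a ∈ p.roots.toFinset, (x - a) ^ (p.roots.count a) := by
      rw [hD, Polynomial.eval_multiset_prod, Multiset.map_map]
      rw [show Multiset.map (Polynomial.eval x ∘ fun a => X - C a) p.roots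
          = Multiset.map (fun a => x - a) p.roots by
        apply Multiset.map_congr rfl; intros; simp]
      exact Finset.prod_multiset_map_count _ _
    have hevals : s.eval x = ∏ a ∈ p.roots.toFinset,
        (x - a) ^ (if Odd (p.roots.count a) then 1 else 0) := by
      rw [hs, Polynomial.eval_prod, hT, Finset.prod_filter]
      apply Finset.prod_congr rfl
      intro a _
      by_cases h : Odd (p.roots.count a) <;> simp [h]
    have : (p * s).eval x = q.eval x * ∏ a ∈ p.roots.toFinset,
        (x - a) ^ (p.roots.count a + if Odd (p.roots.count a) then 1 else 0) := by
      rw [Polynomial.eval_mul]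
      conv_lhs => rw [hq]
      rw [Polynomial.eval_mul, hevalD, hevals]
      rw [show ∀ A B C' : ℝ, A * B * C' = B * (A * C') from fun _ _ _ => by ring]
      congr 1
      rw [← Finset.prod_mul_distrib]
      apply Finset.prod_congr rfl
      intros; rw [pow_add]
    rw [this]
    apply mul_nonneg (le_of_lt (hqpos x))
    apply Finset.prod_nonneg
    intro a _
    apply Even.pow_nonneg
    by_cases h : Odd (p.roots.count a)
    · rw [if_pos h]
      obtain ⟨m, hm⟩ := h
      exact ⟨m + 1, by omega⟩
    · rw [if_neg h]
      obtain ⟨m, hm⟩ := Nat.not_odd_iff_even.mp h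
      exact ⟨m, by omega⟩
  refine ⟨T, s, hTroots, hsmonic, hsdeg, hTcard, by omega, hnonneg, ?_⟩
  intro x hx
  rw [hs, Polynomial.eval_prod] at hx
  obtain ⟨a, ha, hax⟩ := Finset.prod_eq_zero_iff.mp hx
  have : x = a := by
    have := hax
    simp at this
    linarith [this]
  rw [this]
  exact hTroots a ha

end S13

namespace S13
open Polynomial

lemma L_atomic_fin {n r : ℕ} {w : ℕ → ℝ} {ξ σ : Fin r → ℝ}
    (hM : ∀ m ≤ 2*n, w m = ∑ j, σ j * ξ j ^ m)
    {P : ℝ[X]} (hdeg : P.natDegree ≤ 2*n) :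
    L w P = ∑ j, σ j * P.eval (ξ j) := by
  rw [L_eq_sum_range w P (Nat.lt_succ_of_le hdeg)]
  have h1 : ∀ m ∈ Finset.range (2*n+1), P.coeff m * w m
      = ∑ j, P.coeff m * (σ j * ξ j ^ m) := by
    intro m hm
    rw [hM m (Nat.lt_succ_iff.mp (Finset.mem_range.mp hm)), Finset.mul_sum]
  rw [Finset.sum_congr rfl h1, Finset.sum_comm]
  apply Finset.sum_congr rfl
  intro j _
  rw [Polynomial.eval_eq_sum_range' (Nat.lt_succ_of_le hdeg), Finset.mul_sum]
  apply Finset.sum_congr rfl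
  intros; ring

lemma caseA {n : ℕ} {ν : Measure ℝ} {w : ℕ → ℝ}
    (hrep : Rep ν w (2*n)) (hν0 : ν {0} = 0)
    (hdet : IsUnit (hankel n w).det) (hn : 0 < n) :
    ∃ x : Fin (n+1) → ℝ, Function.Injective x ∧ (∀ ℓ, x ℓ ≠ 0) ∧
      ∃ σ : Fin (n+1) → ℝ, (∀ ℓ, 0 < σ ℓ) ∧ ∀ m ≤ 2*n, w m = ∑ ℓ, σ ℓ * x ℓ ^ m := by
  classical
  obtain ⟨φ, hφ0, hφrow⟩ := exists_phi hrep hdet hn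
  set p : ℝ[X] := X ^ (n+1) - Qp φ with hp
  have hQφdeg : (Qp φ).natDegree ≤ n := Qp_natDegree_le' φ
  have hpdeg : p.natDegree = n + 1 := by
    rw [hp, Polynomial.natDegree_sub_eq_left_of_natDegree_lt
      (by rw [Polynomial.natDegree_X_pow]; omega), Polynomial.natDegree_X_pow]
  have hpmonic : p.Monic := by
    have : (Qp φ).degree ≤ (n : WithBot ℕ) := Polynomial.natDegree_le_iff_degree_le.mp hQφdeg
    exact Polynomial.monic_X_pow_sub (lt_of_le_of_lt this (by exact_mod_cast Nat.lt_succ_self n))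
  have hQp0 : (Qp φ).eval 0 = φ 0 := by
    rw [Qp_eval]
    rw [Finset.sum_eq_single 0]
    · simp
    · intro j _ hj
      have : (j:ℕ) ≠ 0 := fun h => hj (Fin.ext h)
      rw [zero_pow this, mul_zero]
    · simp
  have hp0 : p.eval 0 ≠ 0 := by
    rw [hp]
    simp only [Polynomial.eval_sub, Polynomial.eval_pow, Polynomial.eval_X, hQp0]
    rw [zero_pow (by omega : n + 1 ≠ 0), zero_sub]
    exact neg_ne_zero.mpr hφ0
  -- orthogonality
  have hortoX : ∀ i : ℕ, i < n → L w (X ^ i * p) = 0 := by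
    intro i hi
    have h1 : X ^ i * p = X ^ (i + (n+1)) - X ^ i * Qp φ := by
      rw [hp]; ring
    rw [h1, show L w (X ^ (i + (n+1)) - X ^ i * Qp φ)
        = Lℓ w (X ^ (i + (n+1))) - Lℓ w (X ^ i * Qp φ) by exact map_sub (Lℓ w) _ _]
    have h2 : Lℓ w (X ^ (i + (n+1))) = w (i + (n+1)) := L_X_pow w _
    have h3 : Lℓ w (X ^ i * Qp φ) = (hankel n w).mulVec φ ⟨i, by omega⟩ :=
      (mulVec_hankel_eq w φ ⟨i, by omega⟩).symm
    rw [h2, h3, hφrow ⟨i, by omega⟩ (by simpa using hi)]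
    simp only
    rw [show n + 1 + (⟨i, by omega⟩ : Fin (n+1)).1 = i + (n+1) by simp; omega]
    ring
  have horto : ∀ Q : ℝ[X], Q.natDegree ≤ n - 1 → L w (Q * p) = 0 := by
    intro Q hQdeg
    conv_lhs => rw [Q.as_sum_range' n (by omega)]
    rw [Finset.sum_mul]
    rw [show L w (∑ i ∈ Finset.range n, Polynomial.monomial i (Q.coeff i) * p)
        = Lℓ w (∑ i ∈ Finset.range n, Polynomial.monomial i (Q.coeff i) * p) from rfl, map_sum]
    apply Finset.sum_eq_zero
    intro i hi
    have h1 : Polynomial.monomial i (Q.coeff i) * p = Q.coeff i • (X ^ i * p) := by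
      rw [Polynomial.smul_eq_C_mul, ← Polynomial.C_mul_X_pow_eq_monomial]
      ring
    rw [show Lℓ w (Polynomial.monomial i (Q.coeff i) * p)
        = L w (Polynomial.monomial i (Q.coeff i) * p) from rfl, h1, L_smul,
      hortoX i (Finset.mem_range.mp hi), mul_zero]
  obtain ⟨T, s, hTroots, hsmonic, hsdeg, hTcard, hTpar, hnonneg, hsroots⟩ :=
    sign_structure hpmonic
  rw [hpdeg] at hTcard hTpar
  rcases (by omega : T.card = n + 1 ∨ T.card ≤ n - 1) with hTbig | hTsmall
  · -- nondegenerate: T has n+1 elements, the nodes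
    set e : Fin (n+1) ≃ {x // x ∈ T} := (finCongr hTbig.symm).trans T.equivFin.symm with he
    set ξ : Fin (n+1) → ℝ := fun j => (e j : ℝ) with hξ
    have hξinj : Function.Injective ξ := fun a b h => e.injective (Subtype.ext h)
    have hξT : ∀ j, ξ j ∈ T := fun j => (e j).2
    have hξroot : ∀ j, p.eval (ξ j) = 0 := fun j => hTroots _ (hξT j)
    have hξne : ∀ j, ξ j ≠ 0 := by
      intro j h0
      have := hξroot j
      rw [h0] at this
      exact hp0 this
    set B : Matrix (Fin (n+1)) (Fin (n+1)) ℝ := (Matrix.vandermonde ξ)ᵀ with hB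
    have hBdet : IsUnit B.det := by
      rw [isUnit_iff_ne_zero, hB, Matrix.det_transpose, Matrix.det_vandermonde]
      apply Finset.prod_ne_zero_iff.mpr
      intro i _
      apply Finset.prod_ne_zero_iff.mpr
      intro j hj
      exact sub_ne_zero_of_ne fun h => (Finset.mem_Ioi.mp hj).ne' (hξinj h)
    set σ : Fin (n+1) → ℝ := B⁻¹.mulVec (fun i : Fin (n+1) => w i) with hσ
    have hbase : ∀ i : Fin (n+1), ∑ j, σ j * ξ j ^ (i:ℕ) = w i := by
      intro i
      have h1 : B.mulVec σ = fun i : Fin (n+1) => w i := by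
        rw [hσ, Matrix.mulVec_mulVec, Matrix.mul_nonsing_inv _ hBdet, Matrix.one_mulVec]
      have h2 := congrFun h1 i
      rw [Matrix.mulVec, dotProduct] at h2
      rw [← h2]
      apply Finset.sum_congr rfl
      intro j _
      rw [hB]
      simp [Matrix.vandermonde, mul_comm]
    have hrec : ∀ j, ξ j ^ (n+1) = ∑ l, φ l * ξ j ^ (l:ℕ) := by
      intro j
      have := hξroot j
      rw [hp, Polynomial.eval_sub, Polynomial.eval_pow, Polynomial.eval_X, sub_eq_zero] at this
      rw [this, Qp_eval]
    have hM : ∀ m, m ≤ 2*n → ∑ j, σ j * ξ j ^ m = w m := by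
      intro m
      induction m using Nat.strong_induction_on with
      | _ m IH =>
      intro hm
      rcases le_or_gt m n with h1 | h1
      · exact hbase ⟨m, by omega⟩
      · have hi : m - (n+1) < n := by omega
        set i := m - (n+1) with hidef
        have him : m = (n+1) + i := by omega
        have hrow := hφrow ⟨i, by omega⟩ (by simpa using hi)
        have hAval : (hankel n w).mulVec φ ⟨i, by omega⟩
            = ∑ l : Fin (n+1), w (i + (l:ℕ)) * φ l := by
          rw [Matrix.mulVec, dotProduct]
          apply Finset.sum_congr rfl
          intro l _
          rw [hankel]
          simp
        have hstep : ∑ j, σ j * ξ j ^ m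
            = ∑ l : Fin (n+1), φ l * ∑ j, σ j * ξ j ^ (i + (l:ℕ)) := by
          have h3 : ∀ j : Fin (n+1), σ j * ξ j ^ m
              = ∑ l : Fin (n+1), φ l * (σ j * ξ j ^ (i + (l:ℕ))) := by
            intro j
            rw [him, pow_add, hrec j, Finset.sum_mul, Finset.mul_sum]
            apply Finset.sum_congr rfl
            intro l _
            rw [pow_add]
            ring
          rw [Finset.sum_congr rfl fun j _ => h3 j, Finset.sum_comm]
          apply Finset.sum_congr rfl
          intro l _
          rw [Finset.mul_sum]
        rw [hstep]
        have hIH : ∀ l : Fin (n+1), ∑ j, σ j * ξ j ^ (i + (l:ℕ)) = w (i + l) := by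
          intro l
          exact IH (i + l) (by have := l.2; omega) (by have := l.2; omega)
        rw [Finset.sum_congr rfl fun l _ => by rw [hIH l]]
        rw [show ∑ l : Fin (n+1), φ l * w (i + (l:ℕ))
            = ∑ l : Fin (n+1), w (i + (l:ℕ)) * φ l from
          Finset.sum_congr rfl fun l _ => mul_comm _ _]
        rw [← hAval, hrow]
        congr 1
        simp
        omega
    -- positivity of weights via Lagrange basis polynomials
    have hσpos : ∀ j, 0 < σ j := by
      intro j
      set Qj : ℝ[X] := Lagrange.basis Finset.univ ξ j with hQj
      have hinjOn : Set.InjOn ξ ↑(Finset.univ : Finset (Fin (n+1))) :=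
        fun a _ b _ h => hξinj h
      have hQjdeg : Qj.natDegree ≤ n := by
        rw [hQj, Lagrange.natDegree_basis hinjOn (Finset.mem_univ j)]
        simp
      have hQjne : Qj ≠ 0 := Lagrange.basis_ne_zero hinjOn (Finset.mem_univ j)
      have hQQdeg : (Qj * Qj).natDegree ≤ 2*n :=
        le_trans Polynomial.natDegree_mul_le (by omega)
      have hLQQ := L_atomic_fin (fun m hm => (hM m hm).symm) hQQdeg
      have hsum : ∑ i, σ i * (Qj * Qj).eval (ξ i) = σ j := by
        rw [Finset.sum_eq_single j]
        · rw [Polynomial.eval_mul, hQj, Lagrange.eval_basis_self hinjOn (Finset.mem_univ j)]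
          ring
        · intro i _ hij
          rw [Polynomial.eval_mul, hQj,
            Lagrange.eval_basis_of_ne (Ne.symm hij) (Finset.mem_univ i)]
          ring
        · simp
      rw [← hsum, ← hLQQ]
      exact L_sq_pos hrep hdet hQjne hQjdeg
    exact ⟨ξ, hξinj, hξne, σ, hσpos, fun m hm => (hM m hm).symm⟩
  · -- degenerate: measure is finitely atomic
    have hgne : p * s ≠ 0 := (hpmonic.mul hsmonic).ne_zero
    have hgdeg : (p * s).natDegree ≤ 2*n := by
      rw [Polynomial.natDegree_mul hpmonic.ne_zero hsmonic.ne_zero, hpdeg, hsdeg]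
      omega
    have hLg : L w (p * s) = 0 := by
      rw [mul_comm]
      exact horto s (by rw [hsdeg]; omega)
    have hvan := ae_zero_of_L_zero hrep hgdeg hnonneg hLg
    obtain ⟨S, hSsub, hS0, hSpos, hSrep⟩ := finsupp_rep hrep hν0 hgne hvan
    have hSp : ∀ x ∈ S, p.eval x = 0 := by
      intro x hx
      have := hSsub hx
      rw [Set.mem_setOf_eq, Polynomial.eval_mul] at this
      rcases mul_eq_zero.mp this with h | h
      · exact h
      · exact hsroots x h
    have hcard_ge : n + 1 ≤ S.card := by
      by_contra hlt
      push_neg at hlt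
      set PS : ℝ[X] := ∏ y ∈ S, (X - C y) with hPS
      have hPSmonic : PS.Monic := monic_prod_of_monic _ _ fun y _ => monic_X_sub_C y
      have hPSdeg : PS.natDegree = S.card := by
        rw [hPS, Polynomial.natDegree_prod _ _ fun y _ => X_sub_C_ne_zero y]
        simp [Polynomial.natDegree_X_sub_C]
      have hPPdeg : (PS * PS).natDegree ≤ 2*n := by
        rw [Polynomial.natDegree_mul hPSmonic.ne_zero hPSmonic.ne_zero, hPSdeg]
        omega
      have hPP : L w (PS * PS) = 0 := by
        rw [L_atomic hSrep hPPdeg]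
        apply Finset.sum_eq_zero
        intro x hx
        rw [Polynomial.eval_mul, hPS, Polynomial.eval_prod,
          Finset.prod_eq_zero hx (by simp)]
        ring
      exact absurd hPP (ne_of_gt (L_sq_pos hrep hdet hPSmonic.ne_zero (by omega)))
    have hcard_le : S.card ≤ n + 1 := by
      have hsub : S ⊆ p.roots.toFinset := by
        intro x hx
        rw [Multiset.mem_toFinset, Polynomial.mem_roots hpmonic.ne_zero]
        exact hSp x hx
      calc S.card ≤ p.roots.toFinset.card := Finset.card_le_card hsub
        _ ≤ Multiset.card p.roots := Multiset.toFinset_card_le _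
        _ ≤ p.natDegree := Polynomial.card_roots' p
        _ = n + 1 := hpdeg
    exact package (by omega) hS0 hSpos hSrep

end S13

namespace S13

theorem core {n r : ℕ} {ν : Measure ℝ} {w : ℕ → ℝ}
    (hrep : Rep ν w (2*n)) (hν0 : ν {0} = 0) (hn : 0 < n)
    (hr : seqRankFull n w r) :
    ∃ x : Fin r → ℝ, Function.Injective x ∧ (∀ ℓ, x ℓ ≠ 0) ∧
      ∃ σ : Fin r → ℝ, (∀ ℓ, 0 < σ ℓ) ∧ ∀ m ≤ 2*n, w m = ∑ ℓ, σ ℓ * x ℓ ^ m := by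
  rcases hr with ⟨hdet, hreq⟩ | ⟨hdet, hrk⟩
  · subst hreq
    exact caseA hrep hν0 hdet hn
  · exact caseB hrep hν0 hdet hrk

end S13

open scoped NNReal ENNReal in
theorem stmt13 (k₁ k₂ : ℕ) (hk₁ : 0 < k₁) (hk₂ : 0 < k₂) (β : ℤ → ℝ)
    (hb : 0 < β (-(2*k₁ : ℤ)))
    (hmeas : ∃ μ : Measure ℝ, μ {0} = 0 ∧
        ∀ m : ℤ, -(2*k₁ : ℤ) ≤ m → m ≤ 2*k₂ →
          Integrable (fun x : ℝ => x ^ m) μ ∧ β m = ∫ x, x ^ m ∂μ)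
    (r : ℕ) (hr : seqRankFull (k₁ + k₂) (fun m => β ((m : ℤ) - 2*k₁)) r) :
    ∃ x : Fin r → ℝ, Function.Injective x ∧ (∀ ℓ, x ℓ ≠ 0) ∧
      ∃ ρ : Fin r → ℝ, (∀ ℓ, 0 < ρ ℓ) ∧
        ∀ m : ℤ, -(2*k₁ : ℤ) ≤ m → m ≤ 2*k₂ →
          β m = ∑ ℓ, ρ ℓ * x ℓ ^ m := by
  classical
  obtain ⟨μ, hμ0, hμ⟩ := hmeas
  set n := k₁ + k₂ with hn
  set w : ℕ → ℝ := fun m => β ((m : ℤ) - 2*k₁) with hw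
  set f : ℝ → ℝ≥0 := fun x => Real.toNNReal ((x ^ (2*k₁))⁻¹) with hf
  have hfmeas : Measurable f := ((measurable_id.pow_const (2*k₁)).inv).real_toNNReal
  set ν : Measure ℝ := μ.withDensity (fun x => (f x : ℝ≥0∞)) with hν
  have hae : ∀ᵐ x ∂μ, x ≠ (0:ℝ) := by
    rw [MeasureTheory.ae_iff]
    simpa using hμ0
  have hν0 : ν {0} = 0 := by
    rw [hν, MeasureTheory.withDensity_apply _ (measurableSet_singleton 0),
      MeasureTheory.setLIntegral_measure_zero _ _ hμ0]
  have hptae : ∀ m : ℕ, (fun x : ℝ => f x • x ^ m)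
      =ᵐ[μ] (fun x : ℝ => x ^ ((m : ℤ) - 2*k₁)) := by
    intro m
    filter_upwards [hae] with x hx
    have hx2 : (0:ℝ) < x ^ (2*k₁) := by
      have h1 : x ^ (2*k₁) = (x ^ k₁)^2 := by
        rw [← pow_mul, Nat.mul_comm]
      rw [h1]
      exact lt_of_le_of_ne (sq_nonneg _) (Ne.symm (pow_ne_zero 2 (pow_ne_zero _ hx)))
    have hcoe : (f x : ℝ) = (x ^ (2*k₁))⁻¹ := by
      rw [hf]
      exact Real.coe_toNNReal _ (inv_nonneg.2 hx2.le)
    have h2 : x ^ ((m:ℤ) - 2*k₁) = x ^ m * (x ^ (2*k₁))⁻¹ := by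
      rw [show (m:ℤ) - 2*k₁ = (m:ℤ) - ((2*k₁ : ℕ) : ℤ) by push_cast; ring,
        zpow_sub₀ hx, zpow_natCast, zpow_natCast, div_eq_mul_inv]
    rw [NNReal.smul_def, smul_eq_mul, hcoe, h2]
    ring
  have hrepν : S13.Rep ν w (2*n) := by
    intro m hm
    have hb1 : -(2*k₁ : ℤ) ≤ (m:ℤ) - 2*k₁ := by omega
    have hb2 : (m:ℤ) - 2*k₁ ≤ 2*k₂ := by
      have : (m : ℤ) ≤ 2*(k₁ + k₂) := by exact_mod_cast hm
      omega
    obtain ⟨hint, hval⟩ := hμ ((m:ℤ) - 2*k₁) hb1 hb2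
    constructor
    · rw [hν, integrable_withDensity_iff_integrable_smul hfmeas]
      exact hint.congr (hptae m).symm
    · rw [hw]
      simp only
      rw [hval, hν, integral_withDensity_eq_integral_smul hfmeas]
      exact integral_congr_ae (hptae m).symm
  obtain ⟨x, hxinj, hxne, σ, hσpos, hmom⟩ :=
    S13.core hrepν hν0 (by omega) hr
  refine ⟨x, hxinj, hxne, fun ℓ => σ ℓ * x ℓ ^ (2*k₁), ?_, ?_⟩
  · intro ℓ
    apply mul_pos (hσpos ℓ)
    have h1 : x ℓ ^ (2*k₁) = (x ℓ ^ k₁)^2 := by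
      rw [← pow_mul, Nat.mul_comm]
    rw [h1]
    exact lt_of_le_of_ne (sq_nonneg _) (Ne.symm (pow_ne_zero 2 (pow_ne_zero _ (hxne ℓ))))
  · intro mz hmz1 hmz2
    set m : ℕ := (mz + 2*k₁).toNat with hm
    have hmcast : (m : ℤ) = mz + 2*k₁ := Int.toNat_of_nonneg (by omega)
    have hmle : m ≤ 2*n := by
      have : (m : ℤ) ≤ 2*(k₁ + k₂) := by omega
      exact_mod_cast this
    have hβ : β mz = w m := by
      rw [hw]
      simp only
      congr 1
      omega
    rw [hβ, hmom m hmle]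
    apply Finset.sum_congr rfl
    intro ℓ _
    have hxl := hxne ℓ
    have h3 : (x ℓ : ℝ) ^ m = x ℓ ^ (2*k₁) * x ℓ ^ mz := by
      have : ((x ℓ) ^ m : ℝ) = (x ℓ) ^ ((m : ℤ)) := (zpow_natCast _ _).symm
      rw [this, hmcast,
        show mz + 2*(k₁:ℤ) = mz + ((2*k₁ : ℕ) : ℤ) by push_cast; ring,
        zpow_add₀ hxl, zpow_natCast]
      ring
    rw [h3]
    ring
end
end

section
/- Let k ≥ 2 and let β^{(2k)} be a 2-dimensional sequence of degree 2k with β_{0,0} > 0 whose moment matrix M(k) is positive semidefinite and recursively generated and satisfies the column relation XY = 1. Let B = {Y^k, ..., Y, 1, X, ..., X^k}. If rank (M(k))_B < 2k, then rank (M(k))_{B∖{X^k}} = rank (M(k))_B = rank (M(k))_{B∖{Y^k}}. -/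
open Matrix

noncomputable section

/-- Index set for the moment matrix `M(k)`: monomials `x^i y^j` with `i + j ≤ k`. -/
def MIdx (k : ℕ) := {p : Fin (k+1) × Fin (k+1) // p.1.1 + p.2.1 ≤ k}

instance (k : ℕ) : Fintype (MIdx k) := by unfold MIdx; infer_instance
instance (k : ℕ) : DecidableEq (MIdx k) := by unfold MIdx; infer_instance

/-- The moment matrix `M(k)` of a bivariate sequence. -/
def M2 (k : ℕ) (β : ℕ → ℕ → ℝ) : Matrix (MIdx k) (MIdx k) ℝ :=
  Matrix.of fun a b => β (a.1.1.1 + b.1.1.1) (a.1.2.1 + b.1.2.1)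

/-- The column vector `p(X,Y)` of the moment matrix `M(k)` associated to
a polynomial `p ∈ ℝ[x,y]`. -/
def colVec (k : ℕ) (β : ℕ → ℕ → ℝ) (p : MvPolynomial (Fin 2) ℝ) :
    MIdx k → ℝ :=
  fun a => ∑ m ∈ p.support, p.coeff m * β (a.1.1.1 + m 0) (a.1.2.1 + m 1)

/-- `M(k)` is recursively generated. -/
def RG2 (k : ℕ) (β : ℕ → ℕ → ℝ) : Prop :=
  ∀ p q : MvPolynomial (Fin 2) ℝ,
    p.totalDegree ≤ k → q.totalDegree ≤ k → (p * q).totalDegree ≤ k →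
    colVec k β p = 0 → colVec k β (p * q) = 0

/-- Exponents of the monomial in position `t` of `B = {Y^k, …, Y, 1, X, …, X^k}`. -/
def mB (k t : ℕ) : ℕ × ℕ := if t ≤ k then (0, k - t) else (t - k, 0)

/-- The compression `(M(k))_B` of the moment matrix to `B`. -/
def MB (k : ℕ) (β : ℕ → ℕ → ℝ) : Matrix (Fin (2*k+1)) (Fin (2*k+1)) ℝ :=
  Matrix.of fun s t =>
    β ((mB k s.1).1 + (mB k t.1).1) ((mB k s.1).2 + (mB k t.1).2)

/-- The compression `(M(k))_{B ∖ {X^k}}`. -/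
def MBnoX (k : ℕ) (β : ℕ → ℕ → ℝ) : Matrix (Fin (2*k)) (Fin (2*k)) ℝ :=
  Matrix.of fun s t =>
    β ((mB k s.1).1 + (mB k t.1).1) ((mB k s.1).2 + (mB k t.1).2)

/-- The compression `(M(k))_{B ∖ {Y^k}}`. -/
def MBnoY (k : ℕ) (β : ℕ → ℕ → ℝ) : Matrix (Fin (2*k)) (Fin (2*k)) ℝ :=
  Matrix.of fun s t =>
    β ((mB k (s.1+1)).1 + (mB k (t.1+1)).1) ((mB k (s.1+1)).2 + (mB k (t.1+1)).2)

namespace Stmt15Aux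

open MvPolynomial Module

variable {k : ℕ} {β : ℕ → ℕ → ℝ}

lemma colVec_eq (p : MvPolynomial (Fin 2) ℝ) (a : MIdx k) :
    colVec k β p a = ∑ m ∈ p.support, p.coeff m * β (a.1.1.1 + m 0) (a.1.2.1 + m 1) := rfl

lemma colVec_subset {p : MvPolynomial (Fin 2) ℝ} {s : Finset (Fin 2 →₀ ℕ)}
    (hs : p.support ⊆ s) (a : MIdx k) :
    colVec k β p a = ∑ m ∈ s, p.coeff m * β (a.1.1.1 + m 0) (a.1.2.1 + m 1) := by
  rw [colVec_eq]
  refine Finset.sum_subset hs (fun m _ hm => ?_)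
  rw [MvPolynomial.notMem_support_iff.mp hm, zero_mul]

lemma colVec_add (p q : MvPolynomial (Fin 2) ℝ) :
    colVec k β (p + q) = colVec k β p + colVec k β q := by
  funext a
  rw [Pi.add_apply,
    colVec_subset (s := p.support ∪ q.support) MvPolynomial.support_add a,
    colVec_subset Finset.subset_union_left a,
    colVec_subset Finset.subset_union_right a, ← Finset.sum_add_distrib]
  exact Finset.sum_congr rfl fun m _ => by rw [MvPolynomial.coeff_add, add_mul]

lemma colVec_neg (p : MvPolynomial (Fin 2) ℝ) :
    colVec k β (-p) = - colVec k β p := by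
  funext a
  rw [Pi.neg_apply, colVec_eq, colVec_eq, MvPolynomial.support_neg, ← Finset.sum_neg_distrib]
  exact Finset.sum_congr rfl fun m _ => by rw [MvPolynomial.coeff_neg, neg_mul]

lemma colVec_monomial (d : Fin 2 →₀ ℕ) (c : ℝ) (a : MIdx k) :
    colVec k β (monomial d c) a = c * β (a.1.1.1 + d 0) (a.1.2.1 + d 1) := by
  classical
  rcases eq_or_ne c 0 with rfl | hc
  · simp [colVec_eq, support_monomial]
  · rw [colVec_eq, support_monomial, if_neg hc, Finset.sum_singleton, coeff_monomial,
      if_pos rfl]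

lemma colVec_finset_sum {ι : Type*} (s : Finset ι) (f : ι → MvPolynomial (Fin 2) ℝ) :
    colVec k β (∑ i ∈ s, f i) = ∑ i ∈ s, colVec k β (f i) := by
  classical
  induction s using Finset.cons_induction with
  | empty => funext a; simp [colVec_eq]
  | cons i s hi ih => rw [Finset.sum_cons, Finset.sum_cons, colVec_add, ih]

end Stmt15Aux

namespace Stmt15Aux

open MvPolynomial Module Finsupp

variable {k : ℕ} {β : ℕ → ℕ → ℝ}

def eExp (k t : ℕ) : Fin 2 →₀ ℕ :=
  Finsupp.single 0 (mB k t).1 + Finsupp.single 1 (mB k t).2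

lemma eExp_apply0 (k t : ℕ) : eExp k t 0 = (mB k t).1 := by
  simp [eExp, Finsupp.single_apply]

lemma eExp_apply1 (k t : ℕ) : eExp k t 1 = (mB k t).2 := by
  simp [eExp, Finsupp.single_apply]

lemma eExp_sum (k t : ℕ) : (eExp k t).sum (fun _ n => n) = (mB k t).1 + (mB k t).2 := by
  unfold eExp
  rw [Finsupp.sum_add_index' (fun _ => rfl) (fun _ _ _ => rfl),
    Finsupp.sum_single_index rfl, Finsupp.sum_single_index rfl]

def cpoly (k : ℕ) (c : Fin (2*k+1) → ℝ) : MvPolynomial (Fin 2) ℝ :=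
  ∑ t : Fin (2*k+1), monomial (eExp k t.1) (c t)

def Fv (k : ℕ) (β : ℕ → ℕ → ℝ) (c : Fin (2*k+1) → ℝ) : MIdx k → ℝ :=
  fun a => ∑ t : Fin (2*k+1), c t * β (a.1.1.1 + (mB k t.1).1) (a.1.2.1 + (mB k t.1).2)

lemma colVec_cpoly (c : Fin (2*k+1) → ℝ) : colVec k β (cpoly k c) = Fv k β c := by
  funext a
  have h := congrFun
    (colVec_finset_sum (β := β) Finset.univ fun t : Fin (2*k+1) => monomial (eExp k t.1) (c t)) a
  rw [cpoly, h, Finset.sum_apply]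
  exact Finset.sum_congr rfl fun t _ => by rw [colVec_monomial, eExp_apply0, eExp_apply1]

lemma mB_fst_le (k : ℕ) {t : ℕ} (ht : t ≤ 2*k) : (mB k t).1 ≤ k := by
  unfold mB; split <;> simp <;> omega

lemma mB_snd_le (k t : ℕ) : (mB k t).2 ≤ k := by
  unfold mB; split <;> simp <;> omega

lemma mB_sum_le (k : ℕ) {t : ℕ} (ht : t ≤ 2*k) : (mB k t).1 + (mB k t).2 ≤ k := by
  unfold mB; split <;> simp <;> omega

def idx (k : ℕ) (t : Fin (2*k+1)) : MIdx k :=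
  ⟨(⟨(mB k t.1).1, Nat.lt_succ_of_le (mB_fst_le k (by have := t.isLt; omega))⟩,
    ⟨(mB k t.1).2, Nat.lt_succ_of_le (mB_snd_le k t.1)⟩),
    mB_sum_le k (by have := t.isLt; omega)⟩

lemma Fv_idx (c : Fin (2*k+1) → ℝ) (s : Fin (2*k+1)) :
    Fv k β c (idx k s) = (MB k β *ᵥ c) s := by
  simp only [Fv, idx, MB, Matrix.mulVec, dotProduct, Matrix.of_apply]
  exact Finset.sum_congr rfl fun t _ => mul_comm _ _

lemma bridge1 (hpsd : (M2 k β).PosSemidef) {c : Fin (2*k+1) → ℝ}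
    (hc : MB k β *ᵥ c = 0) : Fv k β c = 0 := by
  classical
  set ct : MIdx k → ℝ := fun b => ∑ t : Fin (2*k+1), if idx k t = b then c t else 0 with hct
  have hmv : M2 k β *ᵥ ct = Fv k β c := by
    funext a
    simp only [Matrix.mulVec, dotProduct, hct, Finset.mul_sum, mul_ite, mul_zero]
    rw [Finset.sum_comm]
    refine Finset.sum_congr rfl fun t _ => ?_
    rw [Finset.sum_ite_eq, if_pos (Finset.mem_univ _)]
    exact mul_comm _ _
  have hdp : star ct ⬝ᵥ (M2 k β *ᵥ ct) = 0 := by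
    rw [show star ct = ct from funext fun b => star_trivial _, hmv]
    simp only [dotProduct, hct, Finset.sum_mul, ite_mul, zero_mul]
    rw [Finset.sum_comm]
    refine Finset.sum_eq_zero fun t _ => ?_
    rw [Finset.sum_ite_eq, if_pos (Finset.mem_univ _), Fv_idx, hc]
    simp
  have h0 := (hpsd.dotProduct_mulVec_zero_iff ct).mp hdp
  rw [← hmv, h0]

lemma bridge2 {c : Fin (2*k+1) → ℝ} (h : Fv k β c = 0) : MB k β *ᵥ c = 0 := by
  funext s
  rw [← Fv_idx c s, h]
  rfl

end Stmt15Aux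

namespace Stmt15Aux

open MvPolynomial Module Finsupp

variable {k : ℕ} {β : ℕ → ℕ → ℝ}

lemma eExp_low (k : ℕ) {s : ℕ} (h : s ≤ k) : eExp k s = Finsupp.single 1 (k - s) := by
  unfold eExp mB
  rw [if_pos h]
  simp

lemma eExp_high (k : ℕ) {s : ℕ} (h : k < s) : eExp k s = Finsupp.single 0 (s - k) := by
  unfold eExp mB
  rw [if_neg (by omega)]
  simp

lemma mul_X_mono (E : Fin 2 →₀ ℕ) (a : ℝ) (n : Fin 2) :
    monomial E a * X n = monomial (E + Finsupp.single n 1) a := by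
  rw [X, monomial_mul, mul_one]

lemma XYsub1_mul (E : Fin 2 →₀ ℕ) (a : ℝ) :
    (X 0 * X 1 - 1) * monomial E a
      = monomial (Finsupp.single 0 1 + Finsupp.single 1 1 + E) a - monomial E a := by
  rw [sub_mul, one_mul, X, X, monomial_mul, mul_one, monomial_mul, one_mul]

lemma eExp_succ_high (h : k ≤ jv) : eExp k (jv+1) = eExp k jv + Finsupp.single 0 1 := by
  rcases Nat.eq_or_lt_of_le h with h2 | h2
  · subst h2
    rw [eExp_high k (by omega), eExp_low k le_rfl, show k + 1 - k = 1 by omega,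
      show k - k = 0 by omega]
    simp
  · rw [eExp_high k (by omega), eExp_high k h2, ← Finsupp.single_add]
    congr 1
    omega

lemma eExp_pred_high (h : k ≤ jv) : eExp k jv = Finsupp.single 0 (jv + 1 - k - 1) := by
  rcases Nat.eq_or_lt_of_le h with h2 | h2
  · subst h2
    rw [eExp_low k le_rfl, show k + 1 - k - 1 = 0 by omega, show k - k = 0 by omega]
    simp
  · rw [eExp_high k h2]
    congr 1
    omega

/-- Key identity, right-shift version. -/
lemma keyR (jv : ℕ) (hj : jv < 2*k) (a : ℝ) :
    monomial (eExp k (jv+1)) a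
      = monomial (eExp k jv) a * X 0
        - (X 0 * X 1 - 1) * monomial (Finsupp.single 1 (k - 1 - jv))
            (if jv + 1 ≤ k then a else 0) := by
  rw [mul_X_mono, XYsub1_mul]
  by_cases h : jv + 1 ≤ k
  · rw [if_pos h]
    have hE : Finsupp.single 0 1 + Finsupp.single 1 1 + Finsupp.single 1 (k - 1 - jv)
        = eExp k jv + Finsupp.single 0 1 := by
      rw [eExp_low k (by omega : jv ≤ k), add_assoc, ← Finsupp.single_add,
        show 1 + (k - 1 - jv) = k - jv by omega, add_comm]
    rw [hE, sub_sub_cancel, eExp_low k h, show k - (jv+1) = k - 1 - jv by omega]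
  · rw [if_neg h]
    simp only [monomial_zero, sub_zero]
    rw [eExp_succ_high (by omega : k ≤ jv)]

/-- Key identity, left-shift version. -/
lemma keyL (jv : ℕ) (hj : jv < 2*k) (a : ℝ) :
    monomial (eExp k jv) a
      = monomial (eExp k (jv+1)) a * X 1
        - (X 0 * X 1 - 1) * monomial (Finsupp.single 0 (jv + 1 - k - 1))
            (if k + 1 ≤ jv + 1 then a else 0) := by
  rw [mul_X_mono, XYsub1_mul]
  by_cases h : k + 1 ≤ jv + 1
  · rw [if_pos h]
    have hE : Finsupp.single 0 1 + Finsupp.single 1 1 + Finsupp.single 0 (jv + 1 - k - 1)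
        = eExp k (jv+1) + Finsupp.single 1 1 := by
      rw [eExp_high k (by omega : k < jv + 1),
        add_comm (Finsupp.single 0 1) (Finsupp.single 1 1), add_assoc, ← Finsupp.single_add,
        show 1 + (jv + 1 - k - 1) = jv + 1 - k by omega, add_comm]
    rw [hE, sub_sub_cancel, eExp_pred_high (by omega : k ≤ jv)]
  · rw [if_neg h]
    simp only [monomial_zero, sub_zero]
    rw [eExp_low k (by omega : jv ≤ k), eExp_low k (by omega : jv + 1 ≤ k),
      ← Finsupp.single_add, show k - (jv+1) + 1 = k - jv from by omega]

end Stmt15Aux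

namespace Stmt15Aux

open MvPolynomial Module Finsupp

variable {k : ℕ} {β : ℕ → ℕ → ℝ}

def shR (k : ℕ) (c : Fin (2*k+1) → ℝ) : Fin (2*k+1) → ℝ :=
  fun t => if h : t.1 = 0 then 0 else c ⟨t.1 - 1, by have := t.isLt; omega⟩

def shL (k : ℕ) (c : Fin (2*k+1) → ℝ) : Fin (2*k+1) → ℝ :=
  fun t => if h : t.1 = 2*k then 0 else c ⟨t.1 + 1, by have := t.isLt; omega⟩

lemma totalDegree_cpoly {c : Fin (2*k+1) → ℝ} (h0 : c 0 = 0)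
    (hl : c (Fin.last (2*k)) = 0) : (cpoly k c).totalDegree ≤ k - 1 := by
  refine (totalDegree_finset_sum _ _).trans (Finset.sup_le fun t _ => ?_)
  rcases eq_or_ne (c t) 0 with h | h
  · simp [h]
  · rw [totalDegree_monomial _ h, eExp_sum]
    have ht0 : t.1 ≠ 0 := fun hv => h (by rw [show t = 0 from Fin.ext hv]; exact h0)
    have htl : t.1 ≠ 2*k := fun hv =>
      h (by rw [show t = Fin.last (2*k) from Fin.ext (by rw [hv]; rfl)]; exact hl)
    have := t.isLt
    unfold mB
    split <;> omega

lemma colVec_XYsub1 (hXY : ∀ a : MIdx k, β (a.1.1.1 + 1) (a.1.2.1 + 1) = β a.1.1.1 a.1.2.1) :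
    colVec k β (X 0 * X 1 - 1) = 0 := by
  funext a
  have e1 : (X 0 * X 1 : MvPolynomial (Fin 2) ℝ)
      = monomial (Finsupp.single 0 1 + Finsupp.single 1 1) 1 := by
    rw [X, X, monomial_mul, mul_one]
  have e2 : (1 : MvPolynomial (Fin 2) ℝ) = monomial 0 1 := by
    rw [monomial_zero', C_1]
  rw [sub_eq_add_neg, colVec_add, Pi.add_apply, colVec_neg, Pi.neg_apply, e1, e2,
    colVec_monomial, colVec_monomial]
  simp only [Finsupp.add_apply, Finsupp.single_apply, Finsupp.coe_zero, Pi.zero_apply,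
    one_mul, Pi.zero_apply]
  norm_num
  rw [hXY a]
  ring

lemma hdxy : (X 0 * X 1 - (1:MvPolynomial (Fin 2) ℝ)).totalDegree ≤ 2 := by
  refine (totalDegree_sub _ _).trans (max_le ?_ ?_)
  · exact (totalDegree_mul _ _).trans (by simp [totalDegree_X])
  · simp

lemma shiftR_null (hk : 2 ≤ k) (hpsd : (M2 k β).PosSemidef) (hrg : RG2 k β)
    (hXY : ∀ a : MIdx k, β (a.1.1.1 + 1) (a.1.2.1 + 1) = β a.1.1.1 a.1.2.1)
    {c : Fin (2*k+1) → ℝ} (hc : MB k β *ᵥ c = 0) (h0 : c 0 = 0)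
    (hl : c (Fin.last (2*k)) = 0) :
    MB k β *ᵥ shR k c = 0 := by
  have hF : Fv k β c = 0 := bridge1 hpsd hc
  have hcp : colVec k β (cpoly k c) = 0 := by rw [colVec_cpoly]; exact hF
  have hP : (cpoly k c).totalDegree ≤ k - 1 := totalDegree_cpoly h0 hl
  set r : MvPolynomial (Fin 2) ℝ :=
    ∑ t : Fin (2*k+1), monomial (Finsupp.single 1 (k - 1 - t.1))
      (if t.1 + 1 ≤ k then c t else 0) with hr
  have hdr : r.totalDegree ≤ k - 2 := by
    refine (totalDegree_finset_sum _ _).trans (Finset.sup_le fun t _ => ?_)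
    by_cases hcond : t.1 + 1 ≤ k
    · rw [if_pos hcond]
      rcases eq_or_ne (c t) 0 with h | h
      · simp [h]
      · rw [totalDegree_monomial _ h, Finsupp.sum_single_index rfl]
        have ht0 : t.1 ≠ 0 := fun hv => h (by rw [show t = 0 from Fin.ext hv]; exact h0)
        omega
    · rw [if_neg hcond]
      simp
  have h1 : colVec k β (cpoly k c * X 0) = 0 :=
    hrg _ _ (hP.trans (by omega)) (by rw [totalDegree_X]; omega)
      ((totalDegree_mul _ _).trans (by rw [totalDegree_X]; omega)) hcp
  have h2 : colVec k β ((X 0 * X 1 - 1) * r) = 0 :=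
    hrg _ _ (hdxy.trans (by omega)) (hdr.trans (by omega))
      ((totalDegree_mul _ _).trans (by have := hdxy; omega)) (colVec_XYsub1 hXY)
  have hid : cpoly k (shR k c) = cpoly k c * X 0 - (X 0 * X 1 - 1) * r := by
    rw [cpoly, cpoly, hr, Finset.sum_mul, Finset.mul_sum, ← Finset.sum_sub_distrib,
      Fin.sum_univ_succ]
    have hsh0 : shR k c 0 = 0 := by simp [shR]
    rw [hsh0, monomial_zero, zero_add, Fin.sum_univ_castSucc]
    have hlast : monomial (eExp k ((Fin.last (2*k)).1)) (c (Fin.last (2*k))) * X 0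
        - (X 0 * X 1 - 1) * monomial (Finsupp.single 1 (k - 1 - (Fin.last (2*k)).1))
          (if (Fin.last (2*k)).1 + 1 ≤ k then c (Fin.last (2*k)) else 0) = 0 := by
      rw [hl, if_neg (by rw [Fin.val_last]; omega)]
      simp
    rw [hlast, add_zero]
    refine Finset.sum_congr rfl fun j _ => ?_
    have hsh : shR k c j.succ = c j.castSucc := by
      simp only [shR, Fin.val_succ]
      rw [dif_neg (Nat.succ_ne_zero _)]
      rfl
    simp only [Fin.val_succ, Fin.coe_castSucc, hsh]
    exact keyR j.1 j.isLt _
  have h3 : colVec k β (cpoly k (shR k c)) = 0 := by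
    rw [hid, sub_eq_add_neg, colVec_add, colVec_neg, h1, h2]
    simp
  exact bridge2 (by rw [← colVec_cpoly]; exact h3)

lemma shiftL_null (hk : 2 ≤ k) (hpsd : (M2 k β).PosSemidef) (hrg : RG2 k β)
    (hXY : ∀ a : MIdx k, β (a.1.1.1 + 1) (a.1.2.1 + 1) = β a.1.1.1 a.1.2.1)
    {c : Fin (2*k+1) → ℝ} (hc : MB k β *ᵥ c = 0) (h0 : c 0 = 0)
    (hl : c (Fin.last (2*k)) = 0) :
    MB k β *ᵥ shL k c = 0 := by
  have hF : Fv k β c = 0 := bridge1 hpsd hc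
  have hcp : colVec k β (cpoly k c) = 0 := by rw [colVec_cpoly]; exact hF
  have hP : (cpoly k c).totalDegree ≤ k - 1 := totalDegree_cpoly h0 hl
  set r : MvPolynomial (Fin 2) ℝ :=
    ∑ t : Fin (2*k+1), monomial (Finsupp.single 0 (t.1 - k - 1))
      (if k + 1 ≤ t.1 then c t else 0) with hr
  have hdr : r.totalDegree ≤ k - 2 := by
    refine (totalDegree_finset_sum _ _).trans (Finset.sup_le fun t _ => ?_)
    by_cases hcond : k + 1 ≤ t.1
    · rw [if_pos hcond]
      rcases eq_or_ne (c t) 0 with h | h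
      · simp [h]
      · rw [totalDegree_monomial _ h, Finsupp.sum_single_index rfl]
        have htl : t.1 ≠ 2*k := fun hv =>
          h (by rw [show t = Fin.last (2*k) from Fin.ext (by rw [hv]; rfl)]; exact hl)
        have := t.isLt
        omega
    · rw [if_neg hcond]
      simp
  have h1 : colVec k β (cpoly k c * X 1) = 0 :=
    hrg _ _ (hP.trans (by omega)) (by rw [totalDegree_X]; omega)
      ((totalDegree_mul _ _).trans (by rw [totalDegree_X]; omega)) hcp
  have h2 : colVec k β ((X 0 * X 1 - 1) * r) = 0 :=
    hrg _ _ (hdxy.trans (by omega)) (hdr.trans (by omega))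
      ((totalDegree_mul _ _).trans (by have := hdxy; omega)) (colVec_XYsub1 hXY)
  have hid : cpoly k (shL k c) = cpoly k c * X 1 - (X 0 * X 1 - 1) * r := by
    rw [cpoly, cpoly, hr, Finset.sum_mul, Finset.mul_sum, ← Finset.sum_sub_distrib,
      Fin.sum_univ_castSucc]
    have hshl : shL k c (Fin.last (2*k)) = 0 := by simp [shL]
    rw [hshl, monomial_zero, add_zero, Fin.sum_univ_succ]
    have hfirst : monomial (eExp k ((0 : Fin (2*k+1)).1)) (c 0) * X 1
        - (X 0 * X 1 - 1) * monomial (Finsupp.single 0 ((0 : Fin (2*k+1)).1 - k - 1))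
          (if k + 1 ≤ (0 : Fin (2*k+1)).1 then c 0 else 0) = 0 := by
      rw [h0, if_neg (by simp)]
      simp
    rw [hfirst, zero_add]
    refine Finset.sum_congr rfl fun j _ => ?_
    have hsh : shL k c j.castSucc = c j.succ := by
      simp only [shL, Fin.coe_castSucc]
      rw [dif_neg (by have := j.isLt; omega)]
      rfl
    simp only [Fin.val_succ, Fin.coe_castSucc, hsh]
    exact keyL j.1 j.isLt _
  have h3 : colVec k β (cpoly k (shL k c)) = 0 := by
    rw [hid, sub_eq_add_neg, colVec_add, colVec_neg, h1, h2]
    simp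
  exact bridge2 (by rw [← colVec_cpoly]; exact h3)

end Stmt15Aux

namespace Stmt15Aux

open Module

lemma rank_drop {n : ℕ} (A : Matrix (Fin (n+1)) (Fin (n+1)) ℝ) (hsym : Aᵀ = A)
    (f : Fin n → Fin (n+1)) (i₀ : Fin (n+1))
    (hsum : ∀ g : Fin (n+1) → ℝ, ∑ t, g t = g i₀ + ∑ j, g (f j))
    (hcov : ∀ t : Fin (n+1), t = i₀ ∨ ∃ j, f j = t)
    (u : Fin (n+1) → ℝ) (hu : A *ᵥ u = 0) (hui : u i₀ ≠ 0) :
    (A.submatrix f f).rank = A.rank := by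
  classical
  set res : (Fin (n+1) → ℝ) →ₗ[ℝ] (Fin n → ℝ) := LinearMap.funLeft ℝ ℝ f with hres
  have hAf : ∀ x, (A.submatrix f id) *ᵥ x = res (A *ᵥ x) := fun x => rfl
  have hcomp : (A.submatrix f id).mulVecLin = res ∘ₗ A.mulVecLin :=
    LinearMap.ext fun x => hAf x
  have hr1 : LinearMap.range (A.submatrix f id).mulVecLin
      = (LinearMap.range A.mulVecLin).map res := by
    rw [hcomp, LinearMap.range_comp]
  -- injectivity of res on range
  have hrow : ∀ y ∈ LinearMap.range A.mulVecLin, res y = 0 → y = 0 := by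
    rintro y ⟨x, rfl⟩ hres0
    simp only [Matrix.mulVecLin_apply] at *
    have hy : ∀ j, (A *ᵥ x) (f j) = 0 := fun j => congrFun hres0 j
    have hdot : u ⬝ᵥ (A *ᵥ x) = 0 := by
      rw [Matrix.dotProduct_mulVec, ← hsym, Matrix.vecMul_transpose, hu, zero_dotProduct]
    have hsplit := hsum (fun t => u t * (A *ᵥ x) t)
    rw [show (∑ t, u t * (A *ᵥ x) t) = u ⬝ᵥ (A *ᵥ x) from rfl, hdot] at hsplit
    have hz : ∑ j, u (f j) * (A *ᵥ x) (f j) = 0 :=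
      Finset.sum_eq_zero fun j _ => by rw [hy j, mul_zero]
    rw [hz, add_zero] at hsplit
    have hyi : (A *ᵥ x) i₀ = 0 := by
      rcases mul_eq_zero.mp hsplit.symm with h | h
      · exact absurd h hui
      · exact h
    funext t
    rcases hcov t with rfl | ⟨j, rfl⟩
    · exact hyi
    · exact hy j
  -- the two submatrix ranges agree
  have hsub : ∀ z : Fin (n+1) → ℝ, z i₀ = 0 →
      (A.submatrix f id) *ᵥ z = (A.submatrix f f) *ᵥ (res z) := by
    intro z hz
    funext s
    show ∑ t, A (f s) t * z t = _
    rw [hsum (fun t => A (f s) t * z t), hz, mul_zero, zero_add]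
    rfl
  have hr2 : LinearMap.range (A.submatrix f id).mulVecLin
      = LinearMap.range (A.submatrix f f).mulVecLin := by
    apply le_antisymm
    · rintro y ⟨x, rfl⟩
      simp only [Matrix.mulVecLin_apply]
      refine ⟨res (x - (x i₀ / u i₀) • u), ?_⟩
      simp only [Matrix.mulVecLin_apply]
      rw [← hsub (x - (x i₀ / u i₀) • u)
          (by simp [div_mul_cancel₀ _ hui]),
        Matrix.mulVec_sub, Matrix.mulVec_smul, hAf, hAf, hu, map_zero, smul_zero, sub_zero]
    · rintro y ⟨x', rfl⟩
      simp only [Matrix.mulVecLin_apply]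
      refine ⟨(fun t => ∑ j, if f j = t then x' j else 0), ?_⟩
      simp only [Matrix.mulVecLin_apply]
      funext s
      show ∑ t, A (f s) t * (∑ j, if f j = t then x' j else 0) = ∑ j, A (f s) (f j) * x' j
      simp only [Finset.mul_sum, mul_ite, mul_zero]
      rw [Finset.sum_comm]
      exact Finset.sum_congr rfl fun j _ => by
        rw [Finset.sum_ite_eq, if_pos (Finset.mem_univ _)]
  -- finrank preserved under res on the range
  set p := LinearMap.range A.mulVecLin with hp
  have hinj : Function.Injective (res.domRestrict p) := by
    rw [← LinearMap.ker_eq_bot, Submodule.eq_bot_iff]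
    rintro ⟨y, hy⟩ hker
    have : res y = 0 := hker
    exact Subtype.ext (hrow y hy this)
  have hfr : finrank ℝ p = finrank ℝ (p.map res) := by
    rw [← LinearMap.range_domRestrict]
    exact (LinearEquiv.ofInjective _ hinj).finrank_eq
  show finrank ℝ (LinearMap.range (A.submatrix f f).mulVecLin)
      = finrank ℝ (LinearMap.range A.mulVecLin)
  rw [← hr2, hr1, ← hfr]

end Stmt15Aux

namespace Stmt15Aux

open Module

variable {k : ℕ} {β : ℕ → ℕ → ℝ}

lemma exists_null_coord (hlt : (MB k β).rank < 2*k) (i : Fin (2*k+1)) :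
    ∃ c, MB k β *ᵥ c = 0 ∧ c ≠ 0 ∧ c i = 0 := by
  by_contra hcon
  push_neg at hcon
  have hK2 : 2 ≤ finrank ℝ (LinearMap.ker (MB k β).mulVecLin) := by
    have h1 := LinearMap.finrank_range_add_finrank_ker (MB k β).mulVecLin
    rw [Module.finrank_fintype_fun_eq_card, Fintype.card_fin] at h1
    have h2 : finrank ℝ (LinearMap.range (MB k β).mulVecLin) = (MB k β).rank := rfl
    omega
  let φ : LinearMap.ker (MB k β).mulVecLin →ₗ[ℝ] ℝ :=
    (LinearMap.proj i).comp (LinearMap.ker (MB k β).mulVecLin).subtype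
  have hφ : Function.Injective φ := by
    rw [← LinearMap.ker_eq_bot, Submodule.eq_bot_iff]
    rintro ⟨c, hc⟩ hker
    have hc' : MB k β *ᵥ c = 0 := by
      simpa [Matrix.mulVecLin_apply] using (LinearMap.mem_ker.mp hc)
    have hci : c i = 0 := hker
    refine Subtype.ext ?_
    by_contra hne
    have : (c : Fin (2*k+1) → ℝ) ≠ 0 := fun h => hne (by simpa using h)
    exact hcon c hc' this hci
  have := LinearMap.finrank_le_finrank_of_injective hφ
  rw [finrank_self] at this
  omega

lemma exists_last (hk : 2 ≤ k) (hpsd : (M2 k β).PosSemidef) (hrg : RG2 k β)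
    (hXY : ∀ a : MIdx k, β (a.1.1.1 + 1) (a.1.2.1 + 1) = β a.1.1.1 a.1.2.1)
    (hlt : (MB k β).rank < 2*k) :
    ∃ u, MB k β *ᵥ u = 0 ∧ u (Fin.last (2*k)) ≠ 0 := by
  by_contra hcon
  push_neg at hcon
  obtain ⟨c, hc, hc0, hci⟩ := exists_null_coord hlt 0
  set d : ℕ → ℝ := fun n => if hn : n < 2*k+1 then c ⟨n, hn⟩ else 0 with hd
  have hd0 : d 0 = 0 := by
    simp only [hd]
    rw [dif_pos (by omega)]
    simpa using hci
  have hind : ∀ j, MB k β *ᵥ (shR k)^[j] c = 0 ∧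
      ∀ t : Fin (2*k+1), (shR k)^[j] c t = if t.1 < j then 0 else d (t.1 - j) := by
    intro j
    induction j with
    | zero =>
      refine ⟨hc, fun t => ?_⟩
      rw [if_neg (by omega)]
      simp [hd, t.isLt]
      exact fun h => absurd h (by have := t.isLt; omega)
    | succ j ih =>
      obtain ⟨ihn, ihf⟩ := ih
      have hv0 : (shR k)^[j] c 0 = 0 := by
        rw [ihf 0, Fin.val_zero]
        split
        · rfl
        · rw [Nat.zero_sub]
          exact hd0
      have hvl : (shR k)^[j] c (Fin.last (2*k)) = 0 := hcon _ ihn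
      have hnull : MB k β *ᵥ (shR k)^[j+1] c = 0 := by
        rw [Function.iterate_succ_apply']
        exact shiftR_null hk hpsd hrg hXY ihn hv0 hvl
      refine ⟨hnull, fun t => ?_⟩
      rw [Function.iterate_succ_apply']
      show (if h : t.1 = 0 then 0 else (shR k)^[j] c ⟨t.1 - 1, _⟩) = _
      by_cases ht : t.1 = 0
      · rw [dif_pos ht, if_pos (by omega)]
      · rw [dif_neg ht, ihf]
        by_cases hlt2 : t.1 < j + 1
        · rw [if_pos (show (⟨t.1 - 1, _⟩ : Fin (2*k+1)).1 < j by simp; omega), if_pos hlt2]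
        · rw [if_neg (show ¬(⟨t.1 - 1, _⟩ : Fin (2*k+1)).1 < j by simp; omega),
            if_neg hlt2]
          congr 1
          simp
          omega
  obtain ⟨m, hm⟩ : ∃ m, c m ≠ 0 := by
    by_contra h'
    push_neg at h'
    exact hc0 (funext h')
  obtain ⟨hn, hf⟩ := hind (2*k - m.1)
  have hlast := hcon _ hn
  rw [hf (Fin.last (2*k))] at hlast
  rw [Fin.val_last, if_neg (by omega), show 2*k - (2*k - m.1) = m.1 from by
      have := m.isLt; omega] at hlast
  apply hm
  rw [← hlast]
  simp [hd, m.isLt]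
  exact fun h => absurd h (by have := m.isLt; omega)

lemma exists_first (hk : 2 ≤ k) (hpsd : (M2 k β).PosSemidef) (hrg : RG2 k β)
    (hXY : ∀ a : MIdx k, β (a.1.1.1 + 1) (a.1.2.1 + 1) = β a.1.1.1 a.1.2.1)
    (hlt : (MB k β).rank < 2*k) :
    ∃ u, MB k β *ᵥ u = 0 ∧ u 0 ≠ 0 := by
  by_contra hcon
  push_neg at hcon
  obtain ⟨c, hc, hc0, hci⟩ := exists_null_coord hlt (Fin.last (2*k))
  set d : ℕ → ℝ := fun n => if hn : n < 2*k+1 then c ⟨n, hn⟩ else 0 with hd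
  have hdl : d (2*k) = 0 := by
    simp only [hd]
    rw [dif_pos (by omega)]
    exact hci
  have hind : ∀ j, MB k β *ᵥ (shL k)^[j] c = 0 ∧
      ∀ t : Fin (2*k+1), (shL k)^[j] c t = if 2*k < t.1 + j then 0 else d (t.1 + j) := by
    intro j
    induction j with
    | zero =>
      refine ⟨hc, fun t => ?_⟩
      rw [if_neg (by have := t.isLt; omega)]
      simp [hd, t.isLt]
      exact fun h => absurd h (by have := t.isLt; omega)
    | succ j ih =>
      obtain ⟨ihn, ihf⟩ := ih
      have hv0 : (shL k)^[j] c 0 = 0 := hcon _ ihn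
      have hvl : (shL k)^[j] c (Fin.last (2*k)) = 0 := by
        rw [ihf (Fin.last (2*k)), Fin.val_last]
        split
        · rfl
        · have : j = 0 := by omega
          rw [this, add_zero]
          exact hdl
      have hnull : MB k β *ᵥ (shL k)^[j+1] c = 0 := by
        rw [Function.iterate_succ_apply']
        exact shiftL_null hk hpsd hrg hXY ihn hv0 hvl
      refine ⟨hnull, fun t => ?_⟩
      rw [Function.iterate_succ_apply']
      show (if h : t.1 = 2*k then 0 else (shL k)^[j] c ⟨t.1 + 1, _⟩) = _
      by_cases ht : t.1 = 2*k
      · rw [dif_pos ht, if_pos (by omega)]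
      · rw [dif_neg ht, ihf]
        by_cases hlt2 : 2*k < t.1 + (j+1)
        · rw [if_pos (show 2*k < (⟨t.1 + 1, _⟩ : Fin (2*k+1)).1 + j by simp; omega),
            if_pos hlt2]
        · rw [if_neg (show ¬2*k < (⟨t.1 + 1, _⟩ : Fin (2*k+1)).1 + j by simp; omega),
            if_neg hlt2]
          congr 1
          simp
          omega
  obtain ⟨m, hm⟩ : ∃ m, c m ≠ 0 := by
    by_contra h'
    push_neg at h'
    exact hc0 (funext h')
  obtain ⟨hn, hf⟩ := hind m.1
  have hfirst := hcon _ hn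
  rw [hf 0] at hfirst
  rw [Fin.val_zero, zero_add, if_neg (by have := m.isLt; omega)] at hfirst
  apply hm
  rw [← hfirst]
  simp [hd, m.isLt]
  exact fun h => absurd h (by have := m.isLt; omega)

end Stmt15Aux

theorem stmt15 (k : ℕ) (hk : 2 ≤ k) (β : ℕ → ℕ → ℝ) (hb0 : 0 < β 0 0)
    (hpsd : (M2 k β).PosSemidef) (hrg : RG2 k β)
    (hXY : ∀ a : MIdx k, β (a.1.1.1 + 1) (a.1.2.1 + 1) = β a.1.1.1 a.1.2.1)
    (hlt : (MB k β).rank < 2*k) :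
    (MBnoX k β).rank = (MB k β).rank ∧ (MBnoY k β).rank = (MB k β).rank := by
  have hsym : (MB k β)ᵀ = MB k β := by
    ext s t
    show β ((mB k t.1).1 + (mB k s.1).1) ((mB k t.1).2 + (mB k s.1).2) = _
    rw [Nat.add_comm ((mB k t.1).1) ((mB k s.1).1), Nat.add_comm ((mB k t.1).2) ((mB k s.1).2)]
    rfl
  constructor
  · obtain ⟨u, hu, hui⟩ := Stmt15Aux.exists_last hk hpsd hrg hXY hlt
    have he : MBnoX k β = (MB k β).submatrix Fin.castSucc Fin.castSucc := rfl
    rw [he]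
    exact Stmt15Aux.rank_drop (MB k β) hsym Fin.castSucc (Fin.last (2*k))
      (fun g => by rw [Fin.sum_univ_castSucc]; exact add_comm _ _)
      (fun t => by
        rcases Fin.eq_castSucc_or_eq_last t with ⟨j, rfl⟩ | h
        · exact Or.inr ⟨j, rfl⟩
        · exact Or.inl h)
      u hu hui
  · obtain ⟨u, hu, hui⟩ := Stmt15Aux.exists_first hk hpsd hrg hXY hlt
    have he : MBnoY k β = (MB k β).submatrix Fin.succ Fin.succ := rfl
    rw [he]
    exact Stmt15Aux.rank_drop (MB k β) hsym Fin.succ 0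
      (fun g => Fin.sum_univ_succ g)
      (fun t => by
        rcases Fin.eq_zero_or_eq_succ t with rfl | ⟨j, rfl⟩
        · exact Or.inl rfl
        · exact Or.inr ⟨j, rfl⟩)
      u hu hui
end
end

section
/- Let t ∈ ℕ, let x₁,...,x_t ∈ ℝ∖{0} be distinct, ρ₁,...,ρ_t > 0, and k ∈ ℕ. Suppose the 2-dimensional sequence (β_{i,j})_{i+j≤2k} satisfies β_{i,j} = β_{i-2,j-1} whenever i ≥ 2, j ≥ 1. Define β̃_m for m ∈ {-4k, -4k+2, -4k+3, ..., 2k} by β̃_m = β_{0,|m|/2} if m < 0 even, β̃_m = β_{1,⌈|m|/2⌉} if m < 0 odd, and β̃_m = β_{m,0} if m ≥ 0. Then Σ_ℓ ρ_ℓ δ_{(x_ℓ, x_ℓ^{-2})} represents (β_{i,j}) (i.e., β_{i,j} = Σ_ℓ ρ_ℓ x_ℓ^i x_ℓ^{-2j} for all i+j ≤ 2k) if and only if β̃_m = Σ_ℓ ρ_ℓ x_ℓ^m for all m ∈ {-4k, -4k+2, -4k+3, ..., 2k}. -/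
theorem stmt17 (k t : ℕ) (x : Fin t → ℝ) (ρ : Fin t → ℝ)
    (hxinj : Function.Injective x) (hx0 : ∀ ℓ, x ℓ ≠ 0) (hρ : ∀ ℓ, 0 < ρ ℓ)
    (β : ℕ → ℕ → ℝ)
    (hstruct : ∀ i j : ℕ, 2 ≤ i → 1 ≤ j → i + j ≤ 2*k → β i j = β (i-2) (j-1)) :
    (∀ i j : ℕ, i + j ≤ 2*k →
        β i j = ∑ ℓ, ρ ℓ * x ℓ ^ i * ((x ℓ ^ 2)⁻¹) ^ j) ↔
      (∀ m : ℤ, (m = -(4*k : ℤ) ∨ (-(4*k : ℤ) + 2 ≤ m ∧ m ≤ 2*k)) →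
        (if 0 ≤ m then β m.toNat 0
         else if Even m then β 0 ((-m).toNat / 2)
         else β 1 (((-m).toNat + 1) / 2)) =
          ∑ ℓ, ρ ℓ * x ℓ ^ m) := by
  have key : ∀ (i j : ℕ) (m : ℤ), (i:ℤ) - 2*j = m →
      (∑ ℓ, ρ ℓ * x ℓ ^ i * ((x ℓ ^ 2)⁻¹) ^ j) = ∑ ℓ, ρ ℓ * x ℓ ^ m := by
    intro i j m hm
    refine Finset.sum_congr rfl fun ℓ _ => ?_
    have h1 : x ℓ ^ m = x ℓ ^ i * ((x ℓ ^ 2)⁻¹) ^ j := by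
      rw [← hm, zpow_sub₀ (hx0 ℓ), zpow_natCast, div_eq_mul_inv]
      congr 1
      rw [show ((2:ℤ)*j) = ((2*j : ℕ) : ℤ) by push_cast; ring, zpow_natCast,
        pow_mul, inv_pow]
    rw [h1]; ring
  constructor
  · intro h m hm
    split_ifs with h1 h2
    · have hle : m.toNat + 0 ≤ 2*k := by omega
      rw [h m.toNat 0 hle, key _ _ m (by omega)]
    · obtain ⟨r, hr⟩ := h2
      have hle : 0 + (-m).toNat / 2 ≤ 2*k := by omega
      rw [h 0 ((-m).toNat / 2) hle, key _ _ m (by omega)]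
    · have hodd : m % 2 = 1 := Int.not_even_iff.mp h2
      have hle : 1 + ((-m).toNat + 1) / 2 ≤ 2*k := by omega
      rw [h 1 (((-m).toNat + 1) / 2) hle, key _ _ m (by omega)]
  · intro h i j
    induction j generalizing i with
    | zero =>
      intro hij
      have hmem : ((i:ℤ) = -(4*k : ℤ) ∨ (-(4*k : ℤ) + 2 ≤ (i:ℤ) ∧ (i:ℤ) ≤ 2*k)) := by
        omega
      have hms := h (i:ℤ) hmem
      rw [if_pos (by positivity)] at hms
      simp only [Int.toNat_natCast] at hms
      rw [key i 0 (i:ℤ) (by omega)]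
      exact hms
    | succ j IH =>
      intro hij
      rcases Nat.lt_or_ge i 2 with hi | hi
      · interval_cases i
        · have hms := h (-(2*(j+1) : ℤ)) (by omega)
          rw [if_neg (by omega), if_pos ⟨-(j+1 : ℤ), by ring⟩] at hms
          have e : (-(-(2*(j+1) : ℤ))).toNat / 2 = j + 1 := by omega
          rw [e] at hms
          rw [key 0 (j+1) (-(2*(j+1) : ℤ)) (by omega)]
          exact hms
        · have hms := h (1 - 2*(j+1) : ℤ) (by omega)
          rw [if_neg (by omega), if_neg (by rw [Int.not_even_iff]; omega)] at hms
          have e : ((-(1 - 2*(j+1) : ℤ)).toNat + 1) / 2 = j + 1 := by omega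
          rw [e] at hms
          rw [key 1 (j+1) (1 - 2*(j+1) : ℤ) (by omega)]
          exact hms
      · obtain ⟨i', rfl⟩ : ∃ i', i = i' + 2 := ⟨i - 2, by omega⟩
        rw [hstruct (i'+2) (j+1) (by omega) (by omega) hij]
        simp only [Nat.add_sub_cancel]
        rw [IH i' (by omega), key i' j ((i':ℤ) - 2*j) rfl,
          key (i'+2) (j+1) ((i':ℤ) - 2*j) (by push_cast; ring)]
end

section
/- Let v = (v_0,...,v_{2k}) ∈ ℝ^{2k+1} with Hankel matrix A_v = (v_{i+j})_{i,j=0}^k positive semidefinite and singular, v_0 > 0, of rank r ≤ k, and suppose v is positively recursively generated with φ_0 ≠ 0 (where φ = A_v(r-1)^{-1}(v_r,...,v_{2r-1})^T). Then the generating polynomial p(x) = x^r − Σ_{i=0}^{r-1} φ_i x^i has r distinct real roots, all nonzero. -/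
open Matrix MeasureTheory

noncomputable section

/-! ### Auxiliary definitions and lemmas -/

/-- extension of a vector by zeros -/
def extz (k r : ℕ) (x : Fin r → ℝ) : Fin (k+1) → ℝ :=
  fun i => if h : i.1 < r then x ⟨i.1, h⟩ else 0

/-- companion-type matrix of the polynomial `x^r - ∑ φ_i x^i` -/
def cmpn (r : ℕ) (φ : Fin r → ℝ) : Matrix (Fin r) (Fin r) ℝ :=
  Matrix.of fun i j => (if i.1 = j.1 + 1 then (1:ℝ) else 0) + (if j.1 + 1 = r then φ i else 0)

lemma hankel_mulVec_extz {k r : ℕ} {v : ℕ → ℝ} (hrk : r ≤ k + 1) (x : Fin r → ℝ)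
    (i : Fin (k+1)) :
    (hankel k v *ᵥ extz k r x) i = ∑ j : Fin r, v (i.1 + j.1) * x j := by
  set X : ℕ → ℝ := fun n => if h : n < r then x ⟨n, h⟩ else 0 with hX
  have h1 : (hankel k v *ᵥ extz k r x) i = ∑ j : Fin (k+1), v (i.1 + j.1) * X j.1 := rfl
  rw [h1, Fin.sum_univ_eq_sum_range (fun n => v (i.1 + n) * X n) (k+1)]
  rw [← Finset.sum_subset (Finset.range_subset_range.2 hrk)]
  · rw [← Fin.sum_univ_eq_sum_range (fun n => v (i.1 + n) * X n) r]
    refine Finset.sum_congr rfl fun j _ => ?_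
    simp [hX, j.2]
  · intro n _ hn
    simp only [Finset.mem_range, not_lt] at hn
    simp [hX, not_lt.2 hn]

lemma dot_hcorner {k r : ℕ} {v : ℕ → ℝ} (hrk : r ≤ k + 1) (x : Fin r → ℝ) :
    x ⬝ᵥ (hcorner v r *ᵥ x) = extz k r x ⬝ᵥ (hankel k v *ᵥ extz k r x) := by
  set X : ℕ → ℝ := fun n => if h : n < r then x ⟨n, h⟩ else 0 with hX
  have h2 : extz k r x ⬝ᵥ (hankel k v *ᵥ extz k r x)
      = ∑ i : Fin (k+1), X i.1 * ∑ j : Fin r, v (i.1 + j.1) * x j := by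
    refine Finset.sum_congr rfl fun i _ => ?_
    rw [hankel_mulVec_extz hrk]
    rfl
  rw [h2, Fin.sum_univ_eq_sum_range (fun n => X n * ∑ j : Fin r, v (n + j.1) * x j) (k+1),
    ← Finset.sum_subset (Finset.range_subset_range.2 hrk)]
  · rw [← Fin.sum_univ_eq_sum_range (fun n => X n * ∑ j : Fin r, v (n + j.1) * x j) r]
    refine Finset.sum_congr rfl fun i _ => ?_
    simp only [hX, i.2, dif_pos]
    rfl
  · intro n _ hn
    simp only [Finset.mem_range, not_lt] at hn
    simp [hX, not_lt.2 hn]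

lemma lin_indep_cols {k r : ℕ} {v : ℕ → ℝ}
    (hli : ∀ i < r, hcol k v i ∉ Submodule.span ℝ (hcol k v '' {j | j < i}))
    (x : Fin r → ℝ) (hsum : ∑ j : Fin r, x j • hcol k v j.1 = 0) : x = 0 := by
  by_contra hx
  have hne : (Finset.univ.filter fun j : Fin r => x j ≠ 0).Nonempty := by
    obtain ⟨j, hj⟩ := Function.ne_iff.1 hx
    exact ⟨j, by simpa using hj⟩
  set T := Finset.univ.filter fun j : Fin r => x j ≠ 0 with hT
  set m := T.max' hne with hm
  have hxm : x m ≠ 0 := by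
    have := T.max'_mem hne
    simpa [hT] using this
  have hgt : ∀ j : Fin r, m < j → x j = 0 := by
    intro j hj
    by_contra hxj
    exact absurd (T.le_max' j (by simpa [hT] using hxj)) (not_le.2 hj)
  have hsplit : x m • hcol k v m.1
      + ∑ j ∈ Finset.univ.filter (fun j : Fin r => j.1 < m.1), x j • hcol k v j.1 = 0 := by
    rw [← hsum]
    rw [← Finset.add_sum_erase _ _ (Finset.mem_univ m)]
    congr 1
    refine Finset.sum_subset ?_ ?_
    · intro j hj
      simp only [Finset.mem_filter, Finset.mem_univ, true_and] at hj
      simp only [Finset.mem_erase, Finset.mem_univ, and_true]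
      exact Fin.ne_of_lt (Fin.lt_def.2 hj)
    · intro j hj hj2
      simp only [Finset.mem_erase, Finset.mem_univ, and_true] at hj
      simp only [Finset.mem_filter, Finset.mem_univ, true_and, not_lt] at hj2
      have hmj : m < j := by
        rcases lt_or_eq_of_le (Fin.le_def.2 hj2) with h | h
        · exact h
        · exact absurd h.symm hj
      rw [hgt j hmj, zero_smul]
  have hmem : hcol k v m.1 ∈ Submodule.span ℝ (hcol k v '' {j | j < m.1}) := by
    have h1 : x m • hcol k v m.1
        = ∑ j ∈ Finset.univ.filter (fun j : Fin r => j.1 < m.1), (-(x j)) • hcol k v j.1 := by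
      rw [eq_neg_of_add_eq_zero_left hsplit, ← Finset.sum_neg_distrib]
      exact Finset.sum_congr rfl fun j _ => (neg_smul _ _).symm
    have h2 : x m • hcol k v m.1 ∈ Submodule.span ℝ (hcol k v '' {j | j < m.1}) := by
      rw [h1]
      refine Submodule.sum_mem _ fun j hj => ?_
      simp only [Finset.mem_filter, Finset.mem_univ, true_and] at hj
      exact Submodule.smul_mem _ _ (Submodule.subset_span ⟨j.1, hj, rfl⟩)
    have := Submodule.smul_mem _ (x m)⁻¹ h2
    rwa [smul_smul, inv_mul_cancel₀ hxm, one_smul] at this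
  exact hli m.1 m.2 hmem

lemma hcorner_posDef {k r : ℕ} {v : ℕ → ℝ} (hrk : r ≤ k)
    (hpsd : (hankel k v).PosSemidef)
    (hli : ∀ i < r, hcol k v i ∉ Submodule.span ℝ (hcol k v '' {j | j < i})) :
    (hcorner v r).PosDef := by
  have hrr : r ≤ k + 1 := hrk.trans (Nat.le_succ k)
  rw [posDef_iff_dotProduct_mulVec]
  constructor
  · ext i j
    simp [hcorner, conjTranspose_apply, add_comm]
  · intro x hx
    have hstar : star x = x := by
      funext i; simp
    rw [hstar, dot_hcorner hrr]
    rcases lt_or_eq_of_le (hpsd.dotProduct_mulVec_nonneg (extz k r x)) with h | h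
    · rwa [star_trivial] at h
    · exfalso
      rw [star_trivial] at h
      have hker : hankel k v *ᵥ extz k r x = 0 :=
        (hpsd.dotProduct_mulVec_zero_iff (extz k r x)).1 (by rw [star_trivial, ← h])
      have hcomb : ∑ j : Fin r, x j • hcol k v j.1 = 0 := by
        funext i
        have := congrFun hker i
        rw [hankel_mulVec_extz hrr] at this
        simpa [hcol, mul_comm] using this
      exact hx (lin_indep_cols hli x hcomb)

lemma cmpn_mulVec {r : ℕ} (hr0 : 0 < r) (φ : Fin r → ℝ) (w : Fin r → ℝ) (i : Fin r) :
    (cmpn r φ *ᵥ w) i = (∑ j : Fin r, if i.1 = j.1 + 1 then w j else 0)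
      + φ i * w ⟨r - 1, Nat.sub_lt hr0 one_pos⟩ := by
  have h1 : (cmpn r φ *ᵥ w) i
      = ∑ j : Fin r, ((if i.1 = j.1 + 1 then w j else 0)
          + (if j.1 + 1 = r then φ i * w j else 0)) := by
    simp only [cmpn, mulVec, dotProduct, of_apply, add_mul, ite_mul, one_mul, zero_mul]
  rw [h1, Finset.sum_add_distrib]
  congr 1
  rw [show (∑ j : Fin r, if j.1 + 1 = r then φ i * w j else 0)
        = ∑ j : Fin r, (if j = ⟨r - 1, Nat.sub_lt hr0 one_pos⟩ then φ i * w j else 0) from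
      Finset.sum_congr rfl fun j _ => by
        by_cases h : j.1 + 1 = r
        · rw [if_pos h, if_pos (Fin.ext (show j.1 = r - 1 by omega))]
        · exact (if_neg h).trans
            (if_neg fun hc => h (by rw [hc]; show r - 1 + 1 = r; omega)).symm]
  simp

lemma cmpn_eq0 {r : ℕ} (hr0 : 0 < r) (φ : Fin r → ℝ) (w : Fin r → ℝ) (t : ℝ)
    (hw : cmpn r φ *ᵥ w = t • w) :
    t * w ⟨0, hr0⟩ = φ ⟨0, hr0⟩ * w ⟨r - 1, Nat.sub_lt hr0 one_pos⟩ := by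
  have h := congrFun hw ⟨0, hr0⟩
  rw [cmpn_mulVec hr0] at h
  simp only [Pi.smul_apply, smul_eq_mul] at h
  rw [← h]
  have hz : (∑ j : Fin r, if ((⟨0, hr0⟩ : Fin r) : ℕ) = j.1 + 1 then w j else 0) = 0 :=
    Finset.sum_eq_zero fun j _ => if_neg (by simp)
  rw [hz, zero_add]

lemma cmpn_eqS {r : ℕ} (hr0 : 0 < r) (φ : Fin r → ℝ) (w : Fin r → ℝ) (t : ℝ)
    (hw : cmpn r φ *ᵥ w = t • w) (n : ℕ) (h : n + 1 < r) :
    t * w ⟨n + 1, h⟩ = w ⟨n, by omega⟩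
      + φ ⟨n + 1, h⟩ * w ⟨r - 1, Nat.sub_lt hr0 one_pos⟩ := by
  have hcf := congrFun hw ⟨n + 1, h⟩
  rw [cmpn_mulVec hr0] at hcf
  simp only [Pi.smul_apply, smul_eq_mul] at hcf
  rw [← hcf]
  congr 1
  rw [show (∑ j : Fin r, if ((⟨n+1,h⟩ : Fin r) : ℕ) = j.1 + 1 then w j else 0)
      = ∑ j : Fin r, (if j = ⟨n, by omega⟩ then w j else 0) from
    Finset.sum_congr rfl fun j _ => by
      by_cases hc : j = (⟨n, by omega⟩ : Fin r)
      · rw [if_pos (by rw [hc]), if_pos hc]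
      · refine (if_neg ?_).trans (if_neg hc).symm
        intro he
        exact hc (Fin.ext (by simpa using he.symm))]
  simp

lemma cmpn_last_zero {r : ℕ} (hr0 : 0 < r) (φ : Fin r → ℝ) (w : Fin r → ℝ) (t : ℝ)
    (hw : cmpn r φ *ᵥ w = t • w) (hlast : w ⟨r - 1, Nat.sub_lt hr0 one_pos⟩ = 0) :
    w = 0 := by
  have claim : ∀ d : ℕ, w ⟨r - 1 - d, by omega⟩ = 0 := by
    intro d
    induction d with
    | zero => simpa using hlast
    | succ d ih =>
      by_cases hd : d + 1 ≤ r - 1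
      · have hn : (r - 1 - (d+1)) + 1 < r := by omega
        have h2 := cmpn_eqS hr0 φ w t hw (r - 1 - (d+1)) hn
        rw [hlast, mul_zero, add_zero] at h2
        have hidx : (⟨r - 1 - (d+1) + 1, hn⟩ : Fin r) = ⟨r - 1 - d, by omega⟩ :=
          Fin.ext (by show r - 1 - (d+1) + 1 = r - 1 - d; omega)
        rw [hidx, ih] at h2
        rw [← h2, mul_zero]
      · have hidx : (⟨r - 1 - (d+1), by omega⟩ : Fin r) = ⟨r - 1 - d, by omega⟩ :=
          Fin.ext (by show r - 1 - (d+1) = r - 1 - d; omega)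
        rw [hidx]; exact ih
  funext i
  have h3 := claim (r - 1 - i.1)
  have hidx : (⟨r - 1 - (r - 1 - i.1), by omega⟩ : Fin r) = i :=
    Fin.ext (by show r - 1 - (r - 1 - i.1) = i.1; omega)
  rw [hidx] at h3
  simpa using h3

lemma cmpn_root {r : ℕ} (hr0 : 0 < r) (φ : Fin r → ℝ) (w : Fin r → ℝ) (t : ℝ)
    (hw : cmpn r φ *ᵥ w = t • w) (hwne : w ≠ 0) :
    t ^ r - ∑ i : Fin r, φ i * t ^ i.1 = 0 := by
  have hcne : w ⟨r - 1, Nat.sub_lt hr0 one_pos⟩ ≠ 0 :=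
    fun h => hwne (cmpn_last_zero hr0 φ w t hw h)
  set c : ℝ := w ⟨r - 1, Nat.sub_lt hr0 one_pos⟩ with hc
  set W : ℕ → ℝ := fun n => if h : n < r then w ⟨n, h⟩ else 0 with hW
  set Φ : ℕ → ℝ := fun n => if h : n < r then φ ⟨n, h⟩ else 0 with hΦ
  have key : ∀ n ∈ Finset.range r,
      t ^ (n+1) * W n = t ^ n * ((if n = 0 then 0 else W (n-1)) + Φ n * c) := by
    intro n hn
    rw [Finset.mem_range] at hn
    rcases n with _ | m
    · rw [if_pos rfl, pow_one, pow_zero, one_mul, zero_add]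
      have h0 : W 0 = w ⟨0, hr0⟩ := dif_pos hr0
      have hΦ0 : Φ 0 = φ ⟨0, hr0⟩ := dif_pos hr0
      rw [h0, hΦ0, hc]
      exact cmpn_eq0 hr0 φ w t hw
    · rw [if_neg (Nat.succ_ne_zero m), Nat.succ_sub_one]
      have h1 : W (m+1) = w ⟨m+1, hn⟩ := dif_pos hn
      have h2 : W m = w ⟨m, by omega⟩ := dif_pos (by omega)
      have h3 : Φ (m+1) = φ ⟨m+1, hn⟩ := dif_pos hn
      rw [h1, h2, h3, hc, pow_succ, mul_assoc, cmpn_eqS hr0 φ w t hw m hn]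
  obtain ⟨m, rfl⟩ : ∃ m, r = m + 1 := ⟨r - 1, by omega⟩
  have hsum := Finset.sum_congr rfl key
  rw [Finset.sum_range_succ (fun n => t ^ (n+1) * W n) m] at hsum
  have hrhs : ∑ n ∈ Finset.range (m+1),
      t ^ n * ((if n = 0 then 0 else W (n-1)) + Φ n * c)
      = (∑ n ∈ Finset.range m, t ^ (n+1) * W n)
        + (∑ n ∈ Finset.range (m+1), t ^ n * Φ n) * c := by
    have hdist : ∀ n, t ^ n * ((if n = 0 then 0 else W (n-1)) + Φ n * c)
        = (t ^ n * (if n = 0 then 0 else W (n-1))) + t ^ n * Φ n * c := by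
      intro n; ring
    rw [Finset.sum_congr rfl fun n _ => hdist n, Finset.sum_add_distrib]
    congr 1
    · rw [Finset.sum_range_succ' (fun n => t ^ n * (if n = 0 then 0 else W (n-1))) m]
      simp
    · rw [Finset.sum_mul]
  rw [hrhs] at hsum
  have hkey2 : t ^ (m+1) * W m = (∑ n ∈ Finset.range (m+1), t ^ n * Φ n) * c :=
    add_left_cancel hsum
  have hWm : W m = c := by
    show (if h : m < m + 1 then w ⟨m, h⟩ else 0) = c
    rw [dif_pos (Nat.lt_succ_self m)]
    rfl
  have hΦsum : (∑ n ∈ Finset.range (m+1), t ^ n * Φ n)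
      = ∑ i : Fin (m+1), φ i * t ^ i.1 := by
    rw [← Fin.sum_univ_eq_sum_range (fun n => t ^ n * Φ n) (m+1)]
    refine Finset.sum_congr rfl fun i _ => ?_
    simp only [hΦ, dif_pos i.2]
    rw [mul_comm]
  rw [hWm, hΦsum] at hkey2
  have hfin : (t ^ (m+1) - ∑ i : Fin (m+1), φ i * t ^ i.1) * c = 0 := by
    rw [sub_mul, hkey2, sub_self]
  rcases mul_eq_zero.1 hfin with h | h
  · exact h
  · exact absurd h hcne

lemma real_conjTranspose {n : Type*} [Fintype n] (B : Matrix n n ℝ) : Bᴴ = Bᵀ := by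
  ext i j
  simp [conjTranspose_apply]

lemma hcorner_mul_cmpn {r : ℕ} {v : ℕ → ℝ} (φ : Fin r → ℝ)
    (hφ : ∀ i : Fin r, v (i.1 + r) = ∑ t : Fin r, φ t * v (i.1 + t.1)) :
    hcorner v r * cmpn r φ = Matrix.of fun i j : Fin r => v (i.1 + j.1 + 1) := by
  ext i j
  have h1 : (hcorner v r * cmpn r φ) i j
      = ∑ l : Fin r, ((if l.1 = j.1 + 1 then v (i.1 + l.1) else 0)
          + (if j.1 + 1 = r then v (i.1 + l.1) * φ l else 0)) := by
    simp only [hcorner, cmpn, Matrix.mul_apply, of_apply, mul_add, mul_ite, mul_one, mul_zero]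
  rw [h1, Finset.sum_add_distrib]
  by_cases hj : j.1 + 1 = r
  · have hz : (∑ l : Fin r, if l.1 = j.1 + 1 then v (i.1 + l.1) else 0) = 0 :=
      Finset.sum_eq_zero fun l _ => if_neg (by omega)
    rw [hz, zero_add]
    have h2 : (∑ l : Fin r, if j.1 + 1 = r then v (i.1 + l.1) * φ l else 0)
        = ∑ l : Fin r, φ l * v (i.1 + l.1) :=
      Finset.sum_congr rfl fun l _ => by rw [if_pos hj, mul_comm]
    rw [h2, ← hφ i, of_apply]
    congr 1
    omega
  · have hlt : j.1 + 1 < r := by omega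
    have hz : (∑ l : Fin r, if j.1 + 1 = r then v (i.1 + l.1) * φ l else 0) = 0 :=
      Finset.sum_eq_zero fun l _ => if_neg hj
    rw [hz, add_zero]
    rw [show (∑ l : Fin r, if l.1 = j.1 + 1 then v (i.1 + l.1) else 0)
        = ∑ l : Fin r, (if l = ⟨j.1 + 1, hlt⟩ then v (i.1 + l.1) else 0) from
      Finset.sum_congr rfl fun l _ => by
        by_cases hc : l = (⟨j.1 + 1, hlt⟩ : Fin r)
        · rw [if_pos (by rw [hc]), if_pos hc]
        · exact (if_neg fun he => hc (Fin.ext he)).trans (if_neg hc).symm]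
    simp only [Finset.sum_ite_eq', Finset.mem_univ, if_pos, of_apply]
    congr 1

open scoped MatrixOrder in
/-- Eigenvalues/eigenvectors of the symmetrized companion matrix. -/
lemma exists_eigenbasis {r : ℕ} {v : ℕ → ℝ} (φ : Fin r → ℝ)
    (hA : (hcorner v r).PosDef)
    (hAC : hcorner v r * cmpn r φ = Matrix.of fun i j : Fin r => v (i.1 + j.1 + 1)) :
    ∃ (x : Fin r → ℝ) (u : Fin r → (Fin r → ℝ)),
      (∀ ℓ, cmpn r φ *ᵥ u ℓ = x ℓ • u ℓ) ∧ (∀ ℓ, u ℓ ≠ 0) ∧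
      (∀ ℓ₁ ℓ₂, ℓ₁ ≠ ℓ₂ → x ℓ₁ = x ℓ₂ →
        ∀ c₁ c₂ : ℝ, c₂ • u ℓ₁ = c₁ • u ℓ₂ → c₂ = 0) := by
  classical
  set A := hcorner v r with hAdef
  have hAs : A.PosSemidef := hA.posSemidef
  set S := CFC.sqrt A with hSdef
  have hSps : S.PosSemidef := (CFC.sqrt_nonneg A).posSemidef
  have hSS : S * S = A := CFC.sqrt_mul_sqrt_self A hAs.nonneg
  have hSt : Sᵀ = S := by rw [← real_conjTranspose]; exact hSps.1
  have hdS : IsUnit S.det := by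
    rw [isUnit_iff_ne_zero]
    intro h0
    have : A.det = 0 := by rw [← hSS, det_mul, h0, mul_zero]
    exact hA.det_pos.ne' this
  have h1 : S⁻¹ * S = 1 := nonsing_inv_mul S hdS
  have h2 : S * S⁻¹ = 1 := mul_nonsing_inv S hdS
  set C := cmpn r φ with hCdef
  have hACsymm : (A * C)ᵀ = A * C := by
    rw [hAC]
    ext i j
    simp only [transpose_apply, of_apply]
    congr 1
    omega
  have hAt : Aᵀ = A := by rw [← real_conjTranspose]; exact hA.1
  have key : Cᵀ * (S * S) = (S * S) * C := by
    rw [hSS]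
    calc Cᵀ * A = Cᵀ * Aᵀ := by rw [hAt]
    _ = (A * C)ᵀ := by rw [transpose_mul]
    _ = A * C := hACsymm
  set M := S * C * S⁻¹ with hMdef
  have hMt : Mᵀ = M := by
    have hstep : S⁻¹ * (Cᵀ * (S * S)) * S⁻¹ = S⁻¹ * ((S * S) * C) * S⁻¹ := by rw [key]
    simp only [← Matrix.mul_assoc] at hstep
    rw [h1, Matrix.one_mul] at hstep
    rw [Matrix.mul_assoc (S⁻¹ * Cᵀ * S) S S⁻¹, h2, Matrix.mul_one] at hstep
    have hMt' : Mᵀ = S⁻¹ * (Cᵀ * S) := by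
      rw [hMdef]
      simp only [transpose_mul, hSt, transpose_nonsing_inv]
    rw [hMt', ← Matrix.mul_assoc, hstep]
  have hM : M.IsHermitian := by rw [Matrix.IsHermitian, real_conjTranspose, hMt]
  set x := hM.eigenvalues with hxdef
  set e := hM.eigenvectorBasis with hedef
  have hMu : ∀ ℓ, M *ᵥ ⇑(e ℓ) = x ℓ • ⇑(e ℓ) := fun ℓ => hM.mulVec_eigenvectorBasis ℓ
  set u : Fin r → (Fin r → ℝ) := fun ℓ => S⁻¹ *ᵥ ⇑(e ℓ) with hudef
  have hCS : C * S⁻¹ = S⁻¹ * M := by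
    rw [hMdef]
    simp only [← Matrix.mul_assoc]
    rw [h1, Matrix.one_mul]
  have hCu : ∀ ℓ, C *ᵥ u ℓ = x ℓ • u ℓ := by
    intro ℓ
    rw [hudef]
    simp only []
    rw [mulVec_mulVec, hCS, ← mulVec_mulVec, hMu ℓ, mulVec_smul]
  have hSu : ∀ ℓ, S *ᵥ u ℓ = ⇑(e ℓ) := by
    intro ℓ
    rw [hudef]
    simp only []
    rw [mulVec_mulVec, h2, one_mulVec]
  have hune : ∀ ℓ, u ℓ ≠ 0 := by
    intro ℓ h0
    have he0 : ⇑(e ℓ) = 0 := by rw [← hSu ℓ, h0, mulVec_zero]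
    have : e ℓ ≠ 0 := (hM.eigenvectorBasis.orthonormal).ne_zero ℓ
    exact this (by ext i; exact congrFun he0 i)
  refine ⟨x, u, hCu, hune, ?_⟩
  intro ℓ₁ ℓ₂ hne _ c₁ c₂ hcc
  have hON := hM.eigenvectorBasis.orthonormal
  have h11 : (∑ i, e ℓ₁ i * e ℓ₁ i) = 1 := by
    have := orthonormal_iff_ite.mp hON ℓ₁ ℓ₁
    simp only [if_pos rfl, PiLp.inner_apply, RCLike.inner_apply, conj_trivial] at this
    exact this
  have h12 : (∑ i, e ℓ₁ i * e ℓ₂ i) = 0 := by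
    have := orthonormal_iff_ite.mp hON ℓ₁ ℓ₂
    simp only [if_neg hne, PiLp.inner_apply, RCLike.inner_apply, conj_trivial] at this
    rw [← this]; exact Finset.sum_congr rfl fun i _ => mul_comm _ _
  have hcc2 : c₂ • ⇑(e ℓ₁) = c₁ • ⇑(e ℓ₂) := by
    calc c₂ • ⇑(e ℓ₁) = c₂ • (S *ᵥ u ℓ₁) := by rw [hSu ℓ₁]
    _ = S *ᵥ (c₂ • u ℓ₁) := (mulVec_smul S c₂ (u ℓ₁)).symm
    _ = S *ᵥ (c₁ • u ℓ₂) := by rw [hcc]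
    _ = c₁ • (S *ᵥ u ℓ₂) := mulVec_smul S c₁ (u ℓ₂)
    _ = c₁ • ⇑(e ℓ₂) := by rw [hSu ℓ₂]
  have hfin : c₂ = c₁ * ∑ i, e ℓ₁ i * e ℓ₂ i := by
    calc c₂ = c₂ * ∑ i, e ℓ₁ i * e ℓ₁ i := by rw [h11, mul_one]
    _ = ∑ i, e ℓ₁ i * (c₂ • ⇑(e ℓ₁)) i := by
        rw [Finset.mul_sum]; exact Finset.sum_congr rfl fun i _ => by
          simp [Pi.smul_apply, smul_eq_mul]; ring
    _ = ∑ i, e ℓ₁ i * (c₁ • ⇑(e ℓ₂)) i := by rw [hcc2]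
    _ = c₁ * ∑ i, e ℓ₁ i * e ℓ₂ i := by
        rw [Finset.mul_sum]; exact Finset.sum_congr rfl fun i _ => by
          simp [Pi.smul_apply, smul_eq_mul]; ring
  rw [h12, mul_zero] at hfin
  exact hfin

theorem stmt18 (k r : ℕ) (v : ℕ → ℝ) (hv0 : 0 < v 0)
    (hpsd : (hankel k v).PosSemidef) (hsing : (hankel k v).det = 0)
    (hr0 : 0 < r) (hr : r ≤ k) (hrank : seqRank k v r)
    (hprg : ∀ j, r ≤ j → j ≤ 2*k → v j = ∑ i : Fin r, phi v r i * v (j - r + i.1))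
    (hphi0 : phi v r ⟨0, hr0⟩ ≠ 0) :
    ∃ x : Fin r → ℝ, Function.Injective x ∧ (∀ ℓ, x ℓ ≠ 0) ∧
      ∀ ℓ, x ℓ ^ r - ∑ i : Fin r, phi v r i * x ℓ ^ i.1 = 0 := by
  set φ := phi v r with hφdef
  have hφ : ∀ i : Fin r, v (i.1 + r) = ∑ t : Fin r, φ t * v (i.1 + t.1) := by
    intro i
    have hik := i.2
    have h := hprg (i.1 + r) (Nat.le_add_left r i.1) (by omega)
    simpa [Nat.add_sub_cancel] using h
  have hA : (hcorner v r).PosDef := hcorner_posDef hr hpsd hrank.2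
  have hAC := hcorner_mul_cmpn φ hφ
  obtain ⟨x, u, hCu, hune, hsep⟩ := exists_eigenbasis φ hA hAC
  have hroot : ∀ ℓ, x ℓ ^ r - ∑ i : Fin r, φ i * x ℓ ^ i.1 = 0 :=
    fun ℓ => cmpn_root hr0 φ (u ℓ) (x ℓ) (hCu ℓ) (hune ℓ)
  refine ⟨x, ?_, ?_, hroot⟩
  · intro ℓ₁ ℓ₂ heq
    by_contra hne
    set jr : Fin r := ⟨r - 1, Nat.sub_lt hr0 one_pos⟩ with hjr
    set c₁ := u ℓ₁ jr with hc₁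
    set c₂ := u ℓ₂ jr with hc₂
    have hz : cmpn r φ *ᵥ (c₂ • u ℓ₁ - c₁ • u ℓ₂) = x ℓ₁ • (c₂ • u ℓ₁ - c₁ • u ℓ₂) := by
      rw [mulVec_sub, mulVec_smul, mulVec_smul, hCu ℓ₁, hCu ℓ₂, ← heq, smul_sub,
        smul_comm (x ℓ₁) c₂, smul_comm (x ℓ₁) c₁]
    have hlast : (c₂ • u ℓ₁ - c₁ • u ℓ₂) jr = 0 := by
      simp only [Pi.sub_apply, Pi.smul_apply, smul_eq_mul, ← hc₁, ← hc₂]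
      ring
    have hz0 : c₂ • u ℓ₁ - c₁ • u ℓ₂ = 0 := cmpn_last_zero hr0 φ _ (x ℓ₁) hz hlast
    have hcc : c₂ • u ℓ₁ = c₁ • u ℓ₂ := sub_eq_zero.1 hz0
    have hc20 : c₂ = 0 := hsep ℓ₁ ℓ₂ hne heq c₁ c₂ hcc
    exact hune ℓ₂ (cmpn_last_zero hr0 φ (u ℓ₂) (x ℓ₂) (hCu ℓ₂) hc20)
  · intro ℓ hx0
    have h := hroot ℓ
    rw [hx0] at h
    have hpow : (0:ℝ) ^ r = 0 := zero_pow hr0.ne'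
    have hsum : (∑ i : Fin r, φ i * (0:ℝ) ^ i.1) = φ ⟨0, hr0⟩ := by
      rw [Finset.sum_eq_single (⟨0, hr0⟩ : Fin r)]
      · simp
      · intro i _ hi
        have hi0 : i.1 ≠ 0 := fun hh => hi (Fin.ext hh)
        rw [zero_pow hi0, mul_zero]
      · intro hmem; exact absurd (Finset.mem_univ _) hmem
    rw [hpow, hsum] at h
    exact hphi0 (by linarith [h])
end
end

section
/- Let β = (β_{-2k₁},...,β_{2k₂}) with β_{-2k₁} > 0 be a singular sequence (its Hankel matrix M(-k₁,k₂) is singular) of rank r that is recursively generated, with generating polynomial p(x) = x^r − Σ_{i=0}^{r-1} φ_i x^i having roots x_1,...,x_r and densities ρ_1,...,ρ_r > 0 giving a representing measure for the truncated positive part (β_0,...,β_{2k₂}, and further β_j for j ≥ -2k₁ down to some index). If μ = Σ_{ℓ=1}^r ρ_ℓ δ_{x_ℓ} represents β_{j+1},...,β_{j+r} for some -2k₁ ≤ j ≤ -1, i.e., β_{j+i} = Σ_ℓ ρ_ℓ x_ℓ^{j+i} for i = 1,...,r, then μ also represents β_j, i.e., β_j = Σ_ℓ ρ_ℓ x_ℓ^j.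 -/
theorem stmt19 (k₁ k₂ r : ℕ) (hr0 : 0 < r) (β : ℤ → ℝ)
    (φ : Fin r → ℝ) (hφ0 : φ ⟨0, hr0⟩ ≠ 0)
    (x : Fin r → ℝ) (ρ : Fin r → ℝ) (hρ : ∀ ℓ, 0 < ρ ℓ)
    (hx0 : ∀ ℓ, x ℓ ≠ 0)
    (hroot : ∀ ℓ, x ℓ ^ r = ∑ i : Fin r, φ i * x ℓ ^ i.1)
    (ψ : Fin r → ℝ)
    (hψ : ∀ i : Fin r, ψ i =
      if h : i.1 + 1 < r then -(φ ⟨i.1 + 1, h⟩) / φ ⟨0, hr0⟩ else 1 / φ ⟨0, hr0⟩)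
    (hnrg : ∀ m : ℤ, -(2*k₁ : ℤ) ≤ m → m + r ≤ 2*k₂ →
      β m = ∑ i : Fin r, ψ i * β (m + i.1 + 1))
    (j : ℤ) (hj₁ : -(2*k₁ : ℤ) ≤ j) (hj₂ : j ≤ -1) (hj₃ : j + r ≤ 2*k₂)
    (hrep : ∀ i : Fin r, β (j + i.1 + 1) = ∑ ℓ, ρ ℓ * x ℓ ^ (j + i.1 + 1)) :
    β j = ∑ ℓ, ρ ℓ * x ℓ ^ j := by
  have key : ∀ ℓ, (∑ i : Fin r, ψ i * x ℓ ^ (i.1 + 1)) = 1 := by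
    intro ℓ
    have hmul : φ ⟨0, hr0⟩ * (∑ i : Fin r, ψ i * x ℓ ^ (i.1 + 1)) = φ ⟨0, hr0⟩ := by
      rw [Finset.mul_sum]
      have hterm : ∀ i : Fin r, φ ⟨0, hr0⟩ * (ψ i * x ℓ ^ (i.1 + 1)) =
          (if h : i.1 + 1 < r then -(φ ⟨i.1 + 1, h⟩) * x ℓ ^ (i.1 + 1)
           else x ℓ ^ r) := by
        intro i
        rw [hψ i]
        split
        · field_simp
        · have : i.1 + 1 = r := by omega
          rw [this]; field_simp
      rw [Finset.sum_congr rfl fun i _ => hterm i]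
      obtain ⟨n, rfl⟩ : ∃ n, r = n + 1 := ⟨r - 1, by omega⟩
      rw [Fin.sum_univ_castSucc]
      have hlast : ¬ ((Fin.last n).1 + 1 < n + 1) := by simp
      rw [dif_neg hlast]
      have hcast : ∀ i : Fin n,
          (if h : (Fin.castSucc i).1 + 1 < n + 1 then
            -(φ ⟨(Fin.castSucc i).1 + 1, h⟩) * x ℓ ^ ((Fin.castSucc i).1 + 1)
           else x ℓ ^ (n + 1)) = -(φ i.succ * x ℓ ^ (i.1 + 1)) := by
        intro i
        rw [dif_pos (by simpa using i.isLt)]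
        simp [Fin.succ]
      rw [Finset.sum_congr rfl fun i _ => hcast i, hroot ℓ, Fin.sum_univ_succ]
      simp [Fin.succ]
    have h1 : φ ⟨0, hr0⟩ * (∑ i : Fin r, ψ i * x ℓ ^ (i.1 + 1)) = φ ⟨0, hr0⟩ * 1 := by
      rw [hmul, mul_one]
    exact mul_left_cancel₀ hφ0 h1
  calc β j = ∑ i : Fin r, ψ i * β (j + i.1 + 1) := hnrg j hj₁ hj₃
    _ = ∑ i : Fin r, ψ i * ∑ ℓ, ρ ℓ * x ℓ ^ (j + i.1 + 1) := by
        exact Finset.sum_congr rfl fun i _ => by rw [hrep i]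
    _ = ∑ ℓ, ρ ℓ * x ℓ ^ j := by
        rw [Finset.sum_congr rfl (fun i _ => (Finset.mul_sum _ _ _)), Finset.sum_comm]
        refine Finset.sum_congr rfl fun ℓ _ => ?_
        have hz : ∀ i : Fin r, x ℓ ^ (j + (i.1 : ℤ) + 1) = x ℓ ^ j * x ℓ ^ (i.1 + 1) := by
          intro i
          rw [show j + (i.1 : ℤ) + 1 = j + ((i.1 + 1 : ℕ) : ℤ) by push_cast; ring,
            zpow_add₀ (hx0 ℓ), zpow_natCast]
        calc ∑ i : Fin r, ψ i * (ρ ℓ * x ℓ ^ (j + (i.1 : ℤ) + 1))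
            = ρ ℓ * x ℓ ^ j * ∑ i : Fin r, ψ i * x ℓ ^ (i.1 + 1) := by
              rw [Finset.mul_sum]
              exact Finset.sum_congr rfl fun i _ => by rw [hz i]; ring
          _ = ρ ℓ * x ℓ ^ j := by rw [key ℓ, mul_one]
end
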